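/- arXiv:0710.5594 — 6 statements merged into one kernel-verified Lean document; each statement's English description precedes it below -/
import Mathlib

section
/- Let q ∈ I := (−∞,0) ∪ (1,∞). Suppose there exists λ̃ ∈ ℝ^d such that (q−1)·λ̃ᵀx + 1 > 0 for K-almost every x, the function Ỹ(x) := ((q−1)·λ̃ᵀx + 1)^{1/(q−1)} satisfies ∫ g_q(Ỹ(x)) K(dx) < ∞, and the pair (λ̃, Ỹ) satisfies the martingale condition (M). Then (λ̃, Ỹ) ∈ A_q and k_q(β,Y) ≥ k_q(λ̃, Ỹ) for every (β,Y) ∈ A_q; that is, (λ̃, Ỹ) solves the minimization problem (P_q). -/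
open MeasureTheory
open scoped ENNReal RealInnerProductSpace

noncomputable section

/-- `ℝ^d` with the Euclidean norm. -/
abbrev E (d : ℕ) := EuclideanSpace ℝ (Fin d)

/-- The truncation function `h(x) = x · 1_{‖x‖ ≤ 1}`. -/
def trunc {d : ℕ} (x : E d) : E d := if ‖x‖ ≤ 1 then x else 0

/-- Action of a `d × d` matrix on a vector of `ℝ^d`. -/
def mv {d : ℕ} (c : Matrix (Fin d) (Fin d) ℝ) (v : E d) : E d :=
  (WithLp.equiv 2 (Fin d → ℝ)).symm (c.mulVec (WithLp.equiv 2 (Fin d → ℝ) v))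

/-- `K` is a Lévy measure: `K({0}) = 0` and `∫ min(1,‖x‖²) K(dx) < ∞`. -/
def IsLevyMeasure {d : ℕ} (K : Measure (E d)) : Prop :=
  K {0} = 0 ∧ ∫⁻ x, ENNReal.ofReal (min 1 (‖x‖ ^ 2)) ∂K < ⊤

/-- `g_q(y) = y^q - 1 - q(y-1)` (real exponent `q`). -/
def gq (q y : ℝ) : ℝ := y ^ q - 1 - q * (y - 1)

/-- `k_q(β, Y) = (q(q-1)/2) βᵀcβ + ∫ g_q(Y(x)) K(dx)`. -/
def kq {d : ℕ} (q : ℝ) (c : Matrix (Fin d) (Fin d) ℝ) (K : Measure (E d))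
    (β : E d) (Y : E d → ℝ) : ℝ :=
  q * (q - 1) / 2 * ⟪β, mv c β⟫ + ∫ x, gq q (Y x) ∂K

/-- The martingale condition `(M)`:
`∫ ‖x Y(x) - h(x)‖ K(dx) < ∞` and `b + cβ + ∫ (x Y(x) - h(x)) K(dx) = 0`. -/
def MCond {d : ℕ} (b : E d) (c : Matrix (Fin d) (Fin d) ℝ) (K : Measure (E d))
    (β : E d) (Y : E d → ℝ) : Prop :=
  Integrable (fun x => Y x • x - trunc x) K ∧
  b + mv c β + ∫ x, (Y x • x - trunc x) ∂K = 0

/-- Membership in the admissible set `A_q`: `Y` is measurable, `Y > 0` `K`-a.e.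
(recall that functions which agree `K`-a.e. are identified), `(β,Y)` satisfies the
martingale condition `(M)`, and `∫ g_q(Y(x)) K(dx) < ∞`, i.e. `k_q(β,Y) < ∞`. -/
def memA {d : ℕ} (q : ℝ) (b : E d) (c : Matrix (Fin d) (Fin d) ℝ)
    (K : Measure (E d)) (β : E d) (Y : E d → ℝ) : Prop :=
  Measurable Y ∧ (∀ᵐ x ∂K, 0 < Y x) ∧ MCond b c K β Y ∧
  ∫⁻ x, ENNReal.ofReal (gq q (Y x)) ∂K < ⊤

/-- Bernoulli's inequality for exponents `q < 0` or `q > 1`. -/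
theorem bern_aux {q : ℝ} (hq : q < 0 ∨ 1 < q) {t : ℝ} (ht : 0 < t) :
    1 + q * (t - 1) ≤ t ^ q := by
  rcases hq with hq | hq
  · have h1 : q * (t - 1) ≤ q * Real.log t :=
      mul_le_mul_of_nonpos_left (Real.log_le_sub_one_of_pos ht) hq.le
    have h2 : 1 + Real.log t * q ≤ Real.exp (Real.log t * q) := by
      linarith [Real.add_one_le_exp (Real.log t * q)]
    rw [Real.rpow_def_of_pos ht]
    nlinarith [h1, h2]
  · have := one_add_mul_self_le_rpow_one_add (s := t - 1) (by linarith) hq.le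
    simpa using this

theorem gq_nonneg_aux {q : ℝ} (hq : q < 0 ∨ 1 < q) {y : ℝ} (hy : 0 < y) :
    0 ≤ gq q y := by
  have := bern_aux hq hy
  unfold gq; linarith

/-- Tangent-line (convexity) inequality for `g_q`. -/
theorem gq_tangent_aux {q : ℝ} (hq : q < 0 ∨ 1 < q) {y yt : ℝ} (hy : 0 < y) (hyt : 0 < yt) :
    gq q yt + q * (yt ^ (q - 1) - 1) * (y - yt) ≤ gq q y := by
  have ht : 0 < y / yt := div_pos hy hyt
  have hbern := bern_aux hq ht
  have hA : (0:ℝ) < yt ^ q := Real.rpow_pos_of_pos hyt q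
  have heq : yt * (y / yt) = y := by field_simp
  have hyq : y ^ q = yt ^ q * (y / yt) ^ q := by
    rw [← Real.mul_rpow hyt.le ht.le, heq]
  have hyt1 : yt ^ (q - 1) = yt ^ q / yt := by
    rw [Real.rpow_sub hyt, Real.rpow_one]
  have key : yt ^ q * (1 + q * (y / yt - 1)) ≤ yt ^ q * ((y / yt) ^ q) :=
    mul_le_mul_of_nonneg_left hbern hA.le
  have hx : yt ^ q * (y / yt - 1) = yt ^ q / yt * (y - yt) := by
    field_simp
  have key2 : yt ^ q + q * (yt ^ q / yt * (y - yt)) ≤ yt ^ q * ((y / yt) ^ q) := by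
    have e : yt ^ q + q * (yt ^ q / yt * (y - yt)) = yt ^ q * (1 + q * (y / yt - 1)) := by
      rw [← hx]; ring
    linarith [e ▸ key]
  unfold gq
  rw [hyq, hyt1]
  nlinarith [key2]

theorem measurable_gq_aux {d : ℕ} {q : ℝ} {Y : E d → ℝ} (hY : Measurable Y) :
    Measurable fun x => gq q (Y x) := by
  unfold gq
  have h1 : Measurable fun x => Y x ^ q := by
    show Measurable ((fun y : ℝ => y ^ q) ∘ Y)
    exact Measurable.comp (by fun_prop) hY
  fun_prop

theorem integrable_gq_aux {d : ℕ} {q : ℝ} (hq : q < 0 ∨ 1 < q) {K : Measure (E d)}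
    {Y : E d → ℝ} (hY : Measurable Y) (hpos : ∀ᵐ x ∂K, 0 < Y x)
    (hfin : ∫⁻ x, ENNReal.ofReal (gq q (Y x)) ∂K < ⊤) :
    Integrable (fun x => gq q (Y x)) K := by
  have hnn : 0 ≤ᵐ[K] fun x => gq q (Y x) :=
    hpos.mono fun x hx => gq_nonneg_aux hq hx
  exact ⟨(measurable_gq_aux hY).aestronglyMeasurable,
    (hasFiniteIntegral_iff_ofReal hnn).2 hfin⟩

theorem inner_mv_aux {d : ℕ} (c : Matrix (Fin d) (Fin d) ℝ) (u v : E d) :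
    ⟪u, mv c v⟫ = dotProduct (WithLp.equiv 2 (Fin d → ℝ) u)
      (c.mulVec (WithLp.equiv 2 (Fin d → ℝ) v)) := by
  simp [mv, PiLp.inner_apply, dotProduct, RCLike.inner_apply, mul_comm]

theorem inner_mv_symm_aux {d : ℕ} {c : Matrix (Fin d) (Fin d) ℝ} (hsym : c.IsSymm)
    (u v : E d) : ⟪u, mv c v⟫ = ⟪v, mv c u⟫ := by
  rw [inner_mv_aux, inner_mv_aux, Matrix.dotProduct_mulVec,
    ← Matrix.mulVec_transpose, hsym.eq, dotProduct_comm]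

theorem inner_mv_nonneg_aux {d : ℕ} {c : Matrix (Fin d) (Fin d) ℝ}
    (hpsd : c.PosSemidef) (u : E d) : 0 ≤ ⟪u, mv c u⟫ := by
  rw [inner_mv_aux]
  simpa using hpsd.dotProduct_mulVec_nonneg (WithLp.equiv 2 (Fin d → ℝ) u)

/-- **Theorem 2.9** (sufficiency of condition `(C_q)`). -/
theorem stmt0 (d : ℕ) (hd : 1 ≤ d) (q : ℝ) (hq : q < 0 ∨ 1 < q)
    (b : E d) (c : Matrix (Fin d) (Fin d) ℝ) (hsym : c.IsSymm) (hpsd : c.PosSemidef)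
    (K : Measure (E d)) (hK : IsLevyMeasure K)
    (lam : E d) (Ytil : E d → ℝ)
    (hYdef : ∀ x, Ytil x = ((q - 1) * ⟪lam, x⟫ + 1) ^ (1 / (q - 1)))
    (hpos : ∀ᵐ x ∂K, 0 < (q - 1) * ⟪lam, x⟫ + 1)
    (hfin : ∫⁻ x, ENNReal.ofReal (gq q (Ytil x)) ∂K < ⊤)
    (hM : MCond b c K lam Ytil) :
    memA q b c K lam Ytil ∧
      ∀ β Y, memA q b c K β Y → kq q c K lam Ytil ≤ kq q c K β Y := by
  have hqne : q - 1 ≠ 0 := by rcases hq with h | h <;> intro h' <;> nlinarith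
  have hqq : 0 < q * (q - 1) := by rcases hq with h | h <;> nlinarith
  -- measurability of Ytil
  have hYmT : Measurable Ytil := by
    have h1 : Measurable fun x : E d => (q - 1) * ⟪lam, x⟫ + 1 := by
      have : Measurable fun x : E d => ⟪lam, x⟫ :=
        (continuous_const.inner continuous_id).measurable
      fun_prop
    have h2 : Measurable fun x : E d => ((q - 1) * ⟪lam, x⟫ + 1) ^ (1 / (q - 1)) := by
      show Measurable ((fun y : ℝ => y ^ (1 / (q - 1))) ∘ fun x : E d => (q - 1) * ⟪lam, x⟫ + 1)
      exact Measurable.comp (by fun_prop) h1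
    have : Ytil = fun x => ((q - 1) * ⟪lam, x⟫ + 1) ^ (1 / (q - 1)) := funext hYdef
    rw [this]; exact h2
  have hTpos : ∀ᵐ x ∂K, 0 < Ytil x :=
    hpos.mono fun x hx => by rw [hYdef x]; exact Real.rpow_pos_of_pos hx _
  refine ⟨⟨hYmT, hTpos, hM, hfin⟩, ?_⟩
  rintro β Y ⟨hYm, hYpos, ⟨hint, heq⟩, hYfin⟩
  obtain ⟨hintT, heqT⟩ := hM
  -- integrability facts
  have hgqT_int : Integrable (fun x => gq q (Ytil x)) K :=
    integrable_gq_aux hq hYmT hTpos hfin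
  have hgqY_int : Integrable (fun x => gq q (Y x)) K :=
    integrable_gq_aux hq hYm hYpos hYfin
  have hLY : Integrable (fun x => ⟪lam, Y x • x - trunc x⟫) K := hint.const_inner lam
  have hLT : Integrable (fun x => ⟪lam, Ytil x • x - trunc x⟫) K := hintT.const_inner lam
  set F : E d → ℝ := fun x =>
    gq q (Ytil x) + q * (q - 1) *
      (⟪lam, Y x • x - trunc x⟫ - ⟪lam, Ytil x • x - trunc x⟫) with hF
  have hL2 : Integrable (fun x => q * (q - 1) *
      (⟪lam, Y x • x - trunc x⟫ - ⟪lam, Ytil x • x - trunc x⟫)) K :=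
    (hLY.sub hLT).const_mul _
  have hF_int : Integrable F K := hgqT_int.add hL2
  -- pointwise a.e. inequality
  have hae : F ≤ᵐ[K] fun x => gq q (Y x) := by
    filter_upwards [hYpos, hpos] with x hy hz
    have hTp : 0 < Ytil x := by rw [hYdef x]; exact Real.rpow_pos_of_pos hz _
    have hTpow : Ytil x ^ (q - 1) = (q - 1) * ⟪lam, x⟫ + 1 := by
      rw [hYdef x, ← Real.rpow_mul hz.le, one_div, inv_mul_cancel₀ hqne, Real.rpow_one]
    have htan := gq_tangent_aux hq hy hTp
    rw [hTpow] at htan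
    have hinner : ⟪lam, Y x • x - trunc x⟫ - ⟪lam, Ytil x • x - trunc x⟫
        = ⟪lam, x⟫ * (Y x - Ytil x) := by
      simp only [inner_sub_right, real_inner_smul_right]
      ring
    simp only [hF, hinner]
    nlinarith [htan]
  have hmono : ∫ x, F x ∂K ≤ ∫ x, gq q (Y x) ∂K :=
    integral_mono_ae hF_int hgqY_int hae
  -- compute ∫ F
  have hIY : (∫ x, (Y x • x - trunc x) ∂K) = -(b + mv c β) :=
    eq_neg_of_add_eq_zero_right heq
  have hIT : (∫ x, (Ytil x • x - trunc x) ∂K) = -(b + mv c lam) :=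
    eq_neg_of_add_eq_zero_right heqT
  have hintF : ∫ x, F x ∂K = ∫ x, gq q (Ytil x) ∂K
      + q * (q - 1) * (⟪lam, mv c lam⟫ - ⟪lam, mv c β⟫) := by
    simp only [hF]
    rw [integral_add hgqT_int hL2,
      integral_const_mul, integral_sub hLY hLT, integral_inner hint lam,
      integral_inner hintT lam, hIY, hIT]
    simp only [inner_neg_right, inner_add_right]
    ring
  -- symmetry and psd
  have hsy : ⟪β, mv c lam⟫ = ⟪lam, mv c β⟫ := inner_mv_symm_aux hsym β lam
  have hmvsub : mv c (β - lam) = mv c β - mv c lam := by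
    simp [mv, Matrix.mulVec_sub]
  have hexp : ⟪β - lam, mv c (β - lam)⟫
      = ⟪β, mv c β⟫ - 2 * ⟪lam, mv c β⟫ + ⟪lam, mv c lam⟫ := by
    rw [hmvsub, inner_sub_left, inner_sub_right, inner_sub_right, hsy]
    ring
  have hP : 0 ≤ ⟪β - lam, mv c (β - lam)⟫ := inner_mv_nonneg_aux hpsd _
  rw [hexp] at hP
  unfold kq
  rw [hintF] at hmono
  nlinarith [hmono, hP, hqq]
end
end

section
/- Assume ∫ ‖x‖² K(dx) < ∞ and let λ ∈ ℝ^d. Then the following two conditions are equivalent: (i) b + ∫ (x − h(x)) K(dx) = (c + ∫ x xᵀ K(dx)) λ and 1 − λᵀx > 0 for K-almost every x (the structure condition (SC) with strictly positive density); (ii) setting λ̃ := −λ and Y(x) := λ̃ᵀx + 1, one has Y > 0 K-a.e., ∫ ‖x·Y(x) − h(x)‖ K(dx) < ∞, and b + c·λ̃ + ∫ (x·Y(x) − h(x)) K(dx) = 0 (condition (C_2) with λ̃_2 = −λ). -/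
open MeasureTheory
open scoped ENNReal RealInnerProductSpace

noncomputable section

/-- The second-moment matrix `∫ x xᵀ K(dx)`. -/
def secondMoment {d : ℕ} (K : Measure (E d)) : Matrix (Fin d) (Fin d) ℝ :=
  Matrix.of fun i j => ∫ x, x i * x j ∂K

lemma meas_trunc {d : ℕ} : Measurable (trunc : E d → E d) := by
  unfold trunc
  exact Measurable.ite (measurableSet_le (by fun_prop) measurable_const) measurable_id
    measurable_const

lemma int_sub_trunc {d : ℕ} (K : Measure (E d))
    (hsq : Integrable (fun x => ‖x‖ ^ 2) K) :
    Integrable (fun x : E d => x - trunc x) K := by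
  refine hsq.mono ((measurable_id.sub meas_trunc).aestronglyMeasurable) ?_
  filter_upwards with x
  rw [Real.norm_eq_abs (‖x‖ ^ 2), abs_of_nonneg (sq_nonneg ‖x‖)]
  unfold trunc
  by_cases h : ‖x‖ ≤ 1
  · simp [h, sq_nonneg]
  · push_neg at h
    rw [if_neg (not_le.mpr h), sub_zero]
    calc ‖x‖ = ‖x‖ * 1 := (mul_one _).symm
    _ ≤ ‖x‖ * ‖x‖ := by nlinarith
    _ = ‖x‖ ^ 2 := (sq ‖x‖).symm

lemma int_inner_smul {d : ℕ} (K : Measure (E d)) (lam : E d)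
    (hsq : Integrable (fun x => ‖x‖ ^ 2) K) :
    Integrable (fun x : E d => ⟪lam, x⟫ • x) K := by
  refine (hsq.const_mul ‖lam‖).mono ?_ ?_
  · exact (by fun_prop : Continuous (fun x : E d => ⟪lam, x⟫ • x)).aestronglyMeasurable
  · filter_upwards with x
    calc ‖⟪lam, x⟫ • x‖ = |⟪lam, x⟫| * ‖x‖ := by rw [norm_smul]; rfl
    _ ≤ ‖lam‖ * ‖x‖ * ‖x‖ := by gcongr; exact abs_real_inner_le_norm lam x
    _ = ‖lam‖ * ‖x‖ ^ 2 := by ring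
    _ ≤ ‖‖lam‖ * ‖x‖ ^ 2‖ := le_abs_self _

lemma int_coord_mul {d : ℕ} (K : Measure (E d)) (i j : Fin d)
    (hsq : Integrable (fun x => ‖x‖ ^ 2) K) :
    Integrable (fun x : E d => x j * x i) K := by
  refine hsq.mono ?_ ?_
  · exact (by fun_prop : Continuous (fun x : E d => x j * x i)).aestronglyMeasurable
  · filter_upwards with x
    calc ‖x j * x i‖ = |x j| * |x i| := by rw [Real.norm_eq_abs, abs_mul]
    _ ≤ ‖x‖ * ‖x‖ := by
          have h : ∀ k : Fin d, |x k| ≤ ‖x‖ := by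
            intro k
            rw [EuclideanSpace.norm_eq, ← Real.sqrt_sq_eq_abs]
            apply Real.sqrt_le_sqrt
            simp only [Real.norm_eq_abs, sq_abs]
            exact Finset.single_le_sum (fun m _ => sq_nonneg (x m)) (Finset.mem_univ k)
          exact mul_le_mul (h j) (h i) (abs_nonneg _) (norm_nonneg _)
    _ = ‖x‖ ^ 2 := (sq ‖x‖).symm
    _ ≤ ‖‖x‖ ^ 2‖ := le_abs_self _

lemma integral_inner_smul {d : ℕ} (K : Measure (E d)) (lam : E d)
    (hsq : Integrable (fun x => ‖x‖ ^ 2) K) :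
    ∫ x, ⟪lam, x⟫ • x ∂K = mv (secondMoment K) lam := by
  have hint := int_inner_smul K lam hsq
  ext i
  have h1 : (∫ x, ⟪lam, x⟫ • x ∂K) i = ∫ x, ⟪lam, x⟫ * x i ∂K :=
    (ContinuousLinearMap.integral_comp_comm (EuclideanSpace.proj i) hint).symm
  rw [h1]
  have h2 : ∀ x : E d, ⟪lam, x⟫ * x i = ∑ j, lam j * (x j * x i) := by
    intro x
    simp [PiLp.inner_apply, Finset.sum_mul, mul_assoc]
    exact Finset.sum_congr rfl fun _ _ => mul_left_comm _ _ _
  simp_rw [h2]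
  rw [integral_finset_sum _ (fun j _ => (int_coord_mul K i j hsq).const_mul (lam j))]
  show _ = ((secondMoment K).mulVec (WithLp.equiv 2 (Fin d → ℝ) lam)) i
  simp [Matrix.mulVec, dotProduct, secondMoment, integral_const_mul, mul_comm]

/-- **Section 3.1**: under `∫ ‖x‖² K(dx) < ∞`, the structure condition `(SC)`
with strictly positive density `1 - λᵀx > 0` `K`-a.e. is equivalent to
condition `(C_2)` with `λ̃₂ = -λ`, `Y(x) = λ̃₂ᵀx + 1`. -/
theorem stmt2 (d : ℕ) (hd : 1 ≤ d)
    (b : E d) (c : Matrix (Fin d) (Fin d) ℝ) (hsym : c.IsSymm) (hpsd : c.PosSemidef)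
    (K : Measure (E d)) (hK : IsLevyMeasure K)
    (hsq : Integrable (fun x => ‖x‖ ^ 2) K)
    (lam : E d) :
    -- (i) structure condition (SC) with strictly positive density
    (b + ∫ x, (x - trunc x) ∂K = mv (c + secondMoment K) lam ∧
      ∀ᵐ x ∂K, 0 < 1 - ⟪lam, x⟫)
    ↔
    -- (ii) condition (C₂) for λ̃₂ := -λ, Y(x) := λ̃₂ᵀx + 1
    ((∀ᵐ x ∂K, 0 < ⟪-lam, x⟫ + 1) ∧
      Integrable (fun x => (⟪-lam, x⟫ + 1) • x - trunc x) K ∧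
      b + mv c (-lam) + ∫ x, ((⟪-lam, x⟫ + 1) • x - trunc x) ∂K = 0) := by
  have hi1 := int_sub_trunc K hsq
  have hi2 := int_inner_smul K lam hsq
  have hfun : (fun x : E d => (⟪-lam, x⟫ + 1) • x - trunc x)
      = fun x => (x - trunc x) - ⟪lam, x⟫ • x := by
    funext x
    rw [inner_neg_left]
    module
  have hint2 : Integrable (fun x : E d => (⟪-lam, x⟫ + 1) • x - trunc x) K := by
    rw [hfun]; exact hi1.sub hi2
  have hI : ∫ x, ((⟪-lam, x⟫ + 1) • x - trunc x) ∂K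
      = (∫ x, (x - trunc x) ∂K) - mv (secondMoment K) lam := by
    rw [hfun, integral_sub hi1 hi2, integral_inner_smul K lam hsq]
  have hmvneg : mv c (-lam) = - mv c lam := by
    simp [mv, Matrix.mulVec_neg]
  have hmvadd : mv (c + secondMoment K) lam = mv c lam + mv (secondMoment K) lam := by
    simp [mv, Matrix.add_mulVec]
  have hae : (∀ᵐ x ∂K, 0 < 1 - ⟪lam, x⟫) ↔ (∀ᵐ x ∂K, 0 < ⟪-lam, x⟫ + 1) := by
    simp_rw [inner_neg_left, neg_add_eq_sub]
  have habel : b + -mv c lam + ((∫ x, (x - trunc x) ∂K) - mv (secondMoment K) lam)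
      = (b + ∫ x, (x - trunc x) ∂K) - (mv c lam + mv (secondMoment K) lam) := by abel
  constructor
  · rintro ⟨heq, hpos⟩
    refine ⟨hae.mp hpos, hint2, ?_⟩
    rw [hI, hmvneg, habel, hmvadd] at *
    rw [heq, sub_self]
  · rintro ⟨hpos, _, heq⟩
    rw [hI, hmvneg, habel, sub_eq_zero] at heq
    exact ⟨by rw [hmvadd]; exact heq, hae.mpr hpos⟩
end
end

section
/- Let K be a nonzero Lévy measure on ℝ with K({0}) = 0 and ∫ x² K(dx) < ∞, and let Y : ℝ → ℝ be measurable with Y > 0 K-almost everywhere. Then the set H¹(Y) := { Ψ ∈ L²(K) : ∫ Ψ(x)·x K(dx) = 0 and |Ψ(x)| ≤ a·Y(x) K-a.e. for some a > 0 } is dense in L²(K)-norm in the set H² := { Ψ ∈ L²(K) : ∫ Ψ(x)·x K(dx) = 0 }. -/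
open MeasureTheory Filter
open scoped ENNReal Topology

private lemma sign_mul_self_eq_abs (x : ℝ) : Real.sign x * x = |x| := by
  rcases lt_trichotomy x 0 with h | h | h
  · rw [Real.sign_of_neg h, abs_of_neg h]; ring
  · simp [h]
  · rw [Real.sign_of_pos h, abs_of_pos h]; ring

private lemma abs_sign_le_one (x : ℝ) : |Real.sign x| ≤ 1 := by
  rcases Real.sign_apply_eq x with h | h | h <;> rw [h] <;> norm_num

private lemma measurable_real_sign : Measurable Real.sign := by
  have : Real.sign = fun r : ℝ => if r < 0 then (-1 : ℝ) else if 0 < r then 1 else 0 := by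
    funext r; rfl
  rw [this]
  refine Measurable.ite ?_ measurable_const (Measurable.ite ?_ measurable_const measurable_const)
  · exact measurableSet_lt measurable_id measurable_const
  · exact measurableSet_lt measurable_const measurable_id

/-- **Lemma 3.3**: for a nonzero Lévy measure `K` on `ℝ` with `∫ x² K(dx) < ∞` and
measurable `Y > 0` `K`-a.e., the set
`H¹(Y) = {Ψ ∈ L²(K) : ∫ Ψ(x) x K(dx) = 0, |Ψ| ≤ a Y K-a.e. for some a > 0}`
is dense (in `L²(K)`-norm) in `H² = {Ψ ∈ L²(K) : ∫ Ψ(x) x K(dx) = 0}`. -/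
theorem stmt3 (K : Measure ℝ) (hK0 : K {0} = 0) (hKne : K ≠ 0)
    (hsq : Integrable (fun x => x ^ 2) K)
    (Y : ℝ → ℝ) (hYmeas : Measurable Y) (hYpos : ∀ᵐ x ∂K, 0 < Y x)
    (Ψ : ℝ → ℝ) (hΨ : MemLp Ψ 2 K) (hΨorth : ∫ x, Ψ x * x ∂K = 0)
    (ε : ℝ) (hε : 0 < ε) :
    ∃ Φ : ℝ → ℝ, MemLp Φ 2 K ∧ (∫ x, Φ x * x ∂K = 0) ∧
      (∃ a > 0, ∀ᵐ x ∂K, |Φ x| ≤ a * Y x) ∧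
      eLpNorm (fun x => Ψ x - Φ x) 2 K < ENNReal.ofReal ε := by
  classical
  -- measurable representative of Ψ
  set Ψ' : ℝ → ℝ := hΨ.1.mk Ψ with hΨ'def
  have hΨae : Ψ =ᵐ[K] Ψ' := hΨ.1.ae_eq_mk
  have hΨ'meas : Measurable Ψ' := hΨ.1.stronglyMeasurable_mk.measurable
  have hΨ'mem : MemLp Ψ' 2 K := hΨ.ae_eq hΨae
  have hΨ'orth : ∫ x, Ψ' x * x ∂K = 0 := by
    rw [← hΨorth]
    exact integral_congr_ae (hΨae.symm.mono fun x hx => by simp only []; rw [hx])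
  -- x is in L²
  have hxmem : MemLp (fun x : ℝ => x) 2 K :=
    (memLp_two_iff_integrable_sq aestronglyMeasurable_id).2 hsq
  -- a.e. x ≠ 0
  have hne0 : ∀ᵐ x ∂K, x ≠ 0 := by
    rw [ae_iff]; simpa using hK0
  -- the function g
  set g : ℝ → ℝ := fun x => Real.sign x * min |x| (Y x) with hgdef
  have hgmeas : Measurable g :=
    measurable_real_sign.mul ((measurable_id.abs).min hYmeas)
  have hgabs : ∀ᵐ x ∂K, |g x| ≤ min |x| (Y x) := by
    filter_upwards [hYpos] with x hY
    have h0 : 0 ≤ min |x| (Y x) := le_min (abs_nonneg x) hY.le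
    calc |g x| = |Real.sign x| * |min |x| (Y x)| := abs_mul _ _
      _ ≤ 1 * |min |x| (Y x)| :=
          mul_le_mul_of_nonneg_right (abs_sign_le_one x) (abs_nonneg _)
      _ = min |x| (Y x) := by rw [one_mul, abs_of_nonneg h0]
  have hgmem : MemLp g 2 K := by
    refine MemLp.of_le hxmem hgmeas.aestronglyMeasurable ?_
    filter_upwards [hgabs] with x hx
    simpa [Real.norm_eq_abs] using hx.trans (min_le_left _ _)
  have hgx_eq : ∀ x, g x * x = |x| * min |x| (Y x) := by
    intro x
    calc g x * x = (Real.sign x * x) * min |x| (Y x) := by ring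
      _ = |x| * min |x| (Y x) := by rw [sign_mul_self_eq_abs]
  have hgx_int : Integrable (fun x => g x * x) K := by
    refine hsq.mono' ((hgmeas.mul measurable_id).aestronglyMeasurable) ?_
    filter_upwards [hYpos] with x hY
    rw [hgx_eq, Real.norm_eq_abs]
    have h0 : 0 ≤ min |x| (Y x) := le_min (abs_nonneg x) hY.le
    rw [abs_of_nonneg (mul_nonneg (abs_nonneg x) h0)]
    calc |x| * min |x| (Y x) ≤ |x| * |x| :=
            mul_le_mul_of_nonneg_left (min_le_left _ _) (abs_nonneg x)
      _ = x ^ 2 := by rw [← abs_mul, ← sq, abs_sq]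
  -- c := ∫ g x * x > 0
  set c : ℝ := ∫ x, g x * x ∂K with hcdef
  have hgx_pos : ∀ᵐ x ∂K, 0 < g x * x := by
    filter_upwards [hYpos, hne0] with x hY hx
    rw [hgx_eq]
    exact mul_pos (abs_pos.2 hx) (lt_min (abs_pos.2 hx) hY)
  have hgx_nonneg : 0 ≤ᵐ[K] fun x => g x * x := hgx_pos.mono fun x hx => hx.le
  have hcpos : 0 < c := by
    rcases (integral_nonneg_of_ae hgx_nonneg).lt_or_eq with h | h
    · exact h
    · exfalso
      have hz := (integral_eq_zero_iff_of_nonneg_ae hgx_nonneg hgx_int).1 h.symm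
      have : ∀ᵐ x ∂K, False := by
        filter_upwards [hgx_pos, hz] with x h1 h2
        simp only [Pi.zero_apply] at h2
        exact absurd h2 h1.ne'
      exact hKne (Measure.measure_univ_eq_zero.1 (by simpa using this))
  -- truncations
  set Ψn : ℕ → ℝ → ℝ := fun n x => if |Ψ' x| ≤ n * Y x then Ψ' x else 0 with hΨndef
  have hΨnmeas : ∀ n, Measurable (Ψn n) := fun n =>
    Measurable.ite (measurableSet_le hΨ'meas.abs (hYmeas.const_mul _)) hΨ'meas measurable_const
  have hΨnle : ∀ n x, |Ψn n x| ≤ |Ψ' x| := by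
    intro n x
    simp only [hΨndef]
    split_ifs <;> simp [abs_nonneg]
  have hΨnmem : ∀ n, MemLp (Ψn n) 2 K := fun n =>
    hΨ'mem.of_le (hΨnmeas n).aestronglyMeasurable
      (ae_of_all _ fun x => by simpa [Real.norm_eq_abs] using hΨnle n x)
  -- integrability of products
  have hΨx_int : Integrable (fun x => Ψ' x * x) K := by
    have := hxmem.smul (φ := Ψ') (r := 1) hΨ'mem
      (hpqr := ⟨by simpa using (ENNReal.add_halves 1)⟩)
    rw [← memLp_one_iff_integrable]
    exact this
  have hΨnx_int : ∀ n, Integrable (fun x => Ψn n x * x) K := by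
    intro n
    refine hΨx_int.abs.mono' (((hΨnmeas n).mul measurable_id).aestronglyMeasurable) ?_
    refine ae_of_all _ fun x => ?_
    simp only [Real.norm_eq_abs, abs_mul]
    exact mul_le_mul_of_nonneg_right (hΨnle n x) (abs_nonneg x)
  set cn : ℕ → ℝ := fun n => ∫ x, Ψn n x * x ∂K with hcndef
  set B : ℝ := ∫ x, |Ψ' x * x| ∂K with hBdef
  have hcnB : ∀ n, |cn n| ≤ B := by
    intro n
    calc |cn n| ≤ ∫ x, |Ψn n x * x| ∂K := by
          have := norm_integral_le_integral_norm (μ := K) (f := fun x => Ψn n x * x)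
          simpa only [Real.norm_eq_abs, hcndef] using this
      _ ≤ B := by
          refine integral_mono_ae (hΨnx_int n).abs hΨx_int.abs (ae_of_all _ fun x => ?_)
          simp only [abs_mul]
          exact mul_le_mul_of_nonneg_right (hΨnle n x) (abs_nonneg x)
  -- a.e. pointwise eventual equality
  have hΨn_ev : ∀ᵐ x ∂K, ∀ᶠ n in atTop, Ψn n x = Ψ' x := by
    filter_upwards [hYpos] with x hY
    refine eventually_atTop.2 ⟨⌈|Ψ' x| / Y x⌉₊, fun n hn => ?_⟩
    have h1 : |Ψ' x| / Y x ≤ n := (Nat.le_ceil _).trans (Nat.cast_le.2 hn)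
    have hle : |Ψ' x| ≤ n * Y x := (div_le_iff₀ hY).1 h1
    simp [hΨndef, hle]
  -- cn → 0
  have hcn0 : Tendsto cn atTop (𝓝 0) := by
    have h := tendsto_integral_of_dominated_convergence (F := fun n x => Ψn n x * x)
      (fun x => |Ψ' x * x|)
      (fun n => ((hΨnmeas n).mul measurable_id).aestronglyMeasurable) hΨx_int.abs
      (fun n => ae_of_all _ fun x => by
        simp only [Real.norm_eq_abs, abs_mul]
        exact mul_le_mul_of_nonneg_right (hΨnle n x) (abs_nonneg x))
      (by
        filter_upwards [hΨn_ev] with x hx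
        refine tendsto_const_nhds.congr' ?_
        filter_upwards [hx] with n hn
        rw [hn])
    rw [hΨ'orth] at h
    exact h
  -- the approximants
  set Φn : ℕ → ℝ → ℝ := fun n x => Ψn n x - (cn n / c) * g x with hΦdef
  have hΦmem : ∀ n, MemLp (Φn n) 2 K := fun n => (hΨnmem n).sub (hgmem.const_mul _)
  have hΦorth : ∀ n, ∫ x, Φn n x * x ∂K = 0 := by
    intro n
    have heq : ∀ x, Φn n x * x = Ψn n x * x - (cn n / c) * (g x * x) := fun x => by
      simp only [hΦdef]; ring
    rw [integral_congr_ae (ae_of_all _ heq),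
      integral_sub (hΨnx_int n) (hgx_int.const_mul _), integral_const_mul]
    simp only [← hcndef, ← hcdef]
    field_simp
    exact sub_self _
  have hΦbdd : ∀ n, ∃ a > 0, ∀ᵐ x ∂K, |Φn n x| ≤ a * Y x := by
    intro n
    refine ⟨(n : ℝ) + |cn n / c| + 1, by positivity, ?_⟩
    filter_upwards [hYpos, hgabs] with x hY hg
    have h1 : |Ψn n x| ≤ n * Y x := by
      simp only [hΨndef]
      split_ifs with h
      · exact h
      · simpa using mul_nonneg (Nat.cast_nonneg n) hY.le
    have h2 : |g x| ≤ Y x := hg.trans (min_le_right _ _)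
    calc |Φn n x| ≤ |Ψn n x| + |(cn n / c) * g x| := abs_sub _ _
      _ ≤ n * Y x + |cn n / c| * Y x := by
          rw [abs_mul]
          exact add_le_add h1 (mul_le_mul_of_nonneg_left h2 (abs_nonneg _))
      _ ≤ ((n : ℝ) + |cn n / c| + 1) * Y x := by nlinarith
  -- convergence in L²
  set F : ℕ → ℝ → ℝ := fun n x => Ψ' x - Φn n x with hFdef
  have hFmeas : ∀ n, Measurable (F n) := fun n =>
    hΨ'meas.sub ((hΨnmeas n).sub (hgmeas.const_mul _))
  have hFmem : ∀ n, MemLp (F n) 2 K := fun n => hΨ'mem.sub (hΦmem n)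
  set D : ℝ → ℝ := fun x => (|Ψ' x| + (B / c) * |g x|) ^ 2 with hDdef
  have hDint : Integrable D K := by
    have hmem : MemLp (fun x => |Ψ' x| + (B / c) * |g x|) 2 K := by
      have h1 : MemLp (fun x => |Ψ' x|) 2 K := by
        simpa [Real.norm_eq_abs] using hΨ'mem.norm
      have h2 : MemLp (fun x => |g x|) 2 K := by
        simpa [Real.norm_eq_abs] using hgmem.norm
      exact h1.add (h2.const_mul _)
    exact (memLp_two_iff_integrable_sq hmem.aestronglyMeasurable).1 hmem
  have hB0 : 0 ≤ B := le_trans (abs_nonneg _) (hcnB 0)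
  have hFbound : ∀ n, ∀ᵐ x ∂K, ‖(F n x) ^ 2‖ ≤ D x := by
    intro n
    refine ae_of_all _ fun x => ?_
    have h1 : |Ψ' x - Ψn n x| ≤ |Ψ' x| := by
      simp only [hΨndef]
      split_ifs <;> simp [abs_nonneg]
    have h2 : |cn n / c| ≤ B / c := by
      rw [abs_div, abs_of_pos hcpos]
      gcongr
      exact hcnB n
    have hF : |F n x| ≤ |Ψ' x| + (B / c) * |g x| := by
      have : F n x = (Ψ' x - Ψn n x) + (cn n / c) * g x := by
        simp only [hFdef, hΦdef]; ring
      rw [this]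
      calc |(Ψ' x - Ψn n x) + (cn n / c) * g x|
          ≤ |Ψ' x - Ψn n x| + |(cn n / c) * g x| := abs_add_le _ _
        _ ≤ |Ψ' x| + (B / c) * |g x| := by
            rw [abs_mul]
            exact add_le_add h1 (mul_le_mul_of_nonneg_right h2 (abs_nonneg _))
    rw [Real.norm_eq_abs, abs_pow]
    simp only [hDdef]
    exact pow_le_pow_left₀ (abs_nonneg _) hF 2
  have hItend : Tendsto (fun n => ∫ x, (F n x) ^ 2 ∂K) atTop (𝓝 0) := by
    have h := tendsto_integral_of_dominated_convergence (F := fun n x => (F n x) ^ 2)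
      D (fun n => ((hFmeas n).pow_const 2).aestronglyMeasurable) hDint hFbound
      (by
        filter_upwards [hΨn_ev] with x hx
        have ht1 : Tendsto (fun n => Ψ' x - Ψn n x) atTop (𝓝 0) := by
          refine tendsto_const_nhds.congr' ?_
          filter_upwards [hx] with n hn
          rw [hn, sub_self]
        have ht2 : Tendsto (fun n => (cn n / c) * g x) atTop (𝓝 0) := by
          simpa using (hcn0.div_const c).mul_const (g x)
        have hF0 : Tendsto (fun n => F n x) atTop (𝓝 0) := by
          have := ht1.add ht2
          simp only [add_zero] at this
          exact this.congr fun n => by simp only [hFdef, hΦdef]; ring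
        simpa using hF0.pow 2)
    simpa using h
  have hev : ∀ᶠ n in atTop, ∫ x, (F n x) ^ 2 ∂K < ε ^ 2 :=
    hItend.eventually (gt_mem_nhds (by positivity))
  obtain ⟨n, hn⟩ := hev.exists
  refine ⟨Φn n, hΦmem n, hΦorth n, hΦbdd n, ?_⟩
  have hcong : eLpNorm (fun x => Ψ x - Φn n x) 2 K = eLpNorm (F n) 2 K :=
    eLpNorm_congr_ae (hΨae.mono fun x hx => by simp only [hFdef]; rw [hx])
  rw [hcong, (hFmem n).eLpNorm_eq_integral_rpow_norm two_ne_zero ENNReal.ofNat_ne_top]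
  have htr : (2 : ℝ≥0∞).toReal = 2 := by norm_num
  have hI : ∫ a, ‖F n a‖ ^ (2 : ℝ≥0∞).toReal ∂K = ∫ x, (F n x) ^ 2 ∂K := by
    rw [htr]
    refine integral_congr_ae (ae_of_all _ fun x => ?_)
    simp only [Real.norm_eq_abs]
    rw [Real.rpow_two, sq_abs]
  rw [hI, htr, ENNReal.ofReal_lt_ofReal_iff hε]
  rw [show ((2 : ℝ))⁻¹ = 1 / 2 by norm_num, ← Real.sqrt_eq_rpow]
  exact (Real.sqrt_lt' hε).2 hn
end

section
/- Let q = 2 and assume ∫ ‖x‖² K(dx) < ∞ and that c is positive definite (invertible). If (β₂, Y₂) ∈ A_2 minimizes k_2 over A_2, then Y₂(x) = β₂ᵀx + 1 for K-almost every x; in particular β₂ᵀx + 1 > 0 K-a.e., so condition (C_2) holds with λ̃_2 = β₂. -/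
open MeasureTheory
open scoped ENNReal RealInnerProductSpace

noncomputable section

/- ---------- Auxiliary lemmas ---------- -/

lemma gq_two (y : ℝ) : gq 2 y = (y - 1) ^ 2 := by
  unfold gq
  rw [show (2 : ℝ) = ((2 : ℕ) : ℝ) by norm_num, Real.rpow_natCast]
  push_cast
  ring

/-- A substitute for `Real.sign`. -/
def sg (z : ℝ) : ℝ := if 0 < z then 1 else if z < 0 then -1 else 0

lemma sg_meas : Measurable sg := by
  unfold sg
  exact Measurable.ite (measurableSet_lt measurable_const measurable_id)
    measurable_const (Measurable.ite (measurableSet_lt measurable_id measurable_const)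
      measurable_const measurable_const)

lemma sg_mul_self (z : ℝ) : sg z * z = |z| := by
  unfold sg
  rcases lt_trichotomy z 0 with h | h | h
  · rw [if_neg (by linarith), if_pos h, abs_of_neg h]; ring
  · simp [h]
  · rw [if_pos h, abs_of_pos h]; ring

lemma abs_sg_le (z : ℝ) : |sg z| ≤ 1 := by
  unfold sg
  rcases lt_trichotomy z 0 with h | h | h
  · rw [if_neg (by linarith), if_pos h]; norm_num
  · simp [h]
  · rw [if_pos h]; norm_num

lemma quad_zero {A B ε : ℝ} (hε : 0 < ε) (h : ∀ t : ℝ, |t| ≤ ε → 0 ≤ A * t ^ 2 + B * t) :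
    B = 0 := by
  have key : ∀ s : ℝ, 0 < s → s ≤ ε → |B| ≤ A * s := by
    intro s hs hsε
    have h1 := h s (by rw [abs_of_pos hs]; exact hsε)
    have h2 := h (-s) (by rw [abs_neg, abs_of_pos hs]; exact hsε)
    rw [abs_le]
    constructor <;> nlinarith
  by_contra hB
  have hB' : 0 < |B| := abs_pos.mpr hB
  have hA : 0 < A := by
    have := key ε hε le_rfl
    nlinarith
  have hs : 0 < min ε (|B| / (2 * A)) := lt_min hε (by positivity)
  have h1 := key _ hs (min_le_left _ _)
  have h2 : |B| ≤ A * (|B| / (2 * A)) :=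
    h1.trans (by gcongr; exact min_le_right _ _)
  have heq : A * (|B| / (2 * A)) = |B| / 2 := by field_simp
  rw [heq] at h2
  linarith

section mvlemmas
variable {d : ℕ}

lemma mv_add (c : Matrix (Fin d) (Fin d) ℝ) (u v : E d) :
    mv c (u + v) = mv c u + mv c v := by
  simp [mv, Matrix.mulVec_add]

lemma mv_smul (c : Matrix (Fin d) (Fin d) ℝ) (t : ℝ) (v : E d) :
    mv c (t • v) = t • mv c v := by
  simp [mv, Matrix.mulVec_smul]

lemma mv_neg (c : Matrix (Fin d) (Fin d) ℝ) (v : E d) :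
    mv c (-v) = -mv c v := by
  have := mv_smul c (-1) v
  simpa using this

lemma mv_mv (c c' : Matrix (Fin d) (Fin d) ℝ) (v : E d) :
    mv c (mv c' v) = mv (c * c') v := by
  simp [mv, Matrix.mulVec_mulVec]

lemma mv_one (v : E d) : mv 1 v = v := by
  simp [mv]

lemma inner_mv (c : Matrix (Fin d) (Fin d) ℝ) (u v : E d) :
    ⟪u, mv c v⟫ = dotProduct (WithLp.equiv 2 (Fin d → ℝ) u)
      (c.mulVec (WithLp.equiv 2 (Fin d → ℝ) v)) := by
  simp [mv, PiLp.inner_apply, dotProduct, RCLike.inner_apply, mul_comm]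

lemma inner_mv_symm {c : Matrix (Fin d) (Fin d) ℝ} (hsym : c.IsSymm) (u v : E d) :
    ⟪u, mv c v⟫ = ⟪mv c u, v⟫ := by
  rw [inner_mv, real_inner_comm, inner_mv]
  rw [Matrix.dotProduct_mulVec, ← Matrix.vecMul_transpose, hsym.eq,
    dotProduct_comm]

end mvlemmas

/-- **Theorem 3.1, case 1**: if `∫ ‖x‖² K(dx) < ∞`, `c` is positive definite and
`(β₂, Y₂)` minimizes `k₂` over `A₂`, then `Y₂(x) = β₂ᵀx + 1` `K`-a.e.; in particular
`β₂ᵀx + 1 > 0` `K`-a.e., so condition `(C₂)` holds with `λ̃₂ = β₂`. -/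
theorem stmt4 (d : ℕ) (hd : 1 ≤ d)
    (b : E d) (c : Matrix (Fin d) (Fin d) ℝ) (hsym : c.IsSymm) (hpd : c.PosDef)
    (K : Measure (E d)) (hK : IsLevyMeasure K)
    (hsq : Integrable (fun x => ‖x‖ ^ 2) K)
    (β₂ : E d) (Y₂ : E d → ℝ)
    (hmem : memA 2 b c K β₂ Y₂)
    (hmin : ∀ β Y, memA 2 b c K β Y → kq 2 c K β₂ Y₂ ≤ kq 2 c K β Y) :
    (∀ᵐ x ∂K, Y₂ x = ⟪β₂, x⟫ + 1) ∧ (∀ᵐ x ∂K, 0 < ⟪β₂, x⟫ + 1) := by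
  obtain ⟨hYmeas, hYpos, ⟨hMint, hMeq⟩, hfin⟩ := hmem
  have hdet : IsUnit c.det := (Matrix.PosDef.det_pos hpd).ne'.isUnit
  set Z : E d → ℝ := fun x => Y₂ x - 1 - ⟪β₂, x⟫ with hZ_def
  have hinner_meas : Measurable fun x : E d => ⟪β₂, x⟫ :=
    (continuous_const.inner continuous_id).measurable
  have hZmeas : Measurable Z := (hYmeas.sub measurable_const).sub hinner_meas
  -- (Y₂ - 1)² is integrable
  have hY1sq : Integrable (fun x => (Y₂ x - 1) ^ 2) K := by
    refine ⟨((hYmeas.sub measurable_const).pow_const 2).aestronglyMeasurable, ?_⟩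
    rw [hasFiniteIntegral_iff_ofReal (ae_of_all _ fun x => sq_nonneg _)]
    simpa only [gq_two] using hfin
  -- a rewriting of `kq` at `q = 2`
  have hk : ∀ (β : E d) (Y : E d → ℝ),
      kq 2 c K β Y = ⟪β, mv c β⟫ + ∫ x, (Y x - 1) ^ 2 ∂K := by
    intro β Y
    unfold kq
    simp only [gq_two]
    norm_num
  -- the key variational step
  have key : ∀ S : Set (E d), MeasurableSet S → K S < ⊤ →
      ∀ ε R : ℝ, 0 < ε → 0 ≤ R → (∀ x ∈ S, ε ≤ Y₂ x ∧ ‖x‖ ≤ R) →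
      ∀ᵐ x ∂K, x ∈ S → Z x = 0 := by
    intro S hSmeas hSfin ε R hε hR hSprop
    set δ : E d → ℝ := S.indicator (fun x => sg (Z x)) with hδ_def
    have hδmeas : Measurable δ := (sg_meas.comp hZmeas).indicator hSmeas
    have hδmem : ∀ x ∈ S, δ x = sg (Z x) := fun x hx => Set.indicator_of_mem hx _
    have hδ0 : ∀ x, x ∉ S → δ x = 0 := fun x hx => Set.indicator_of_notMem hx _
    have hδbd : ∀ x, |δ x| ≤ 1 := by
      intro x
      by_cases hx : x ∈ S
      · rw [hδmem x hx]; exact abs_sg_le _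
      · rw [hδ0 x hx]; norm_num
    have hind : Integrable (S.indicator fun _ => (1 : ℝ)) K :=
      (integrable_indicator_iff hSmeas).2 (integrableOn_const hSfin.ne)
    have hindR : Integrable (S.indicator fun _ => R) K :=
      (integrable_indicator_iff hSmeas).2 (integrableOn_const hSfin.ne)
    have hindRb : Integrable (S.indicator fun _ => R * ‖β₂‖) K :=
      (integrable_indicator_iff hSmeas).2 (integrableOn_const hSfin.ne)
    have hInt_δsq : Integrable (fun x => δ x ^ 2) K := by
      refine hind.mono' ((hδmeas.pow_const 2).aestronglyMeasurable)
        (ae_of_all _ fun x => ?_)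
      by_cases hx : x ∈ S
      · rw [Set.indicator_of_mem hx, Real.norm_eq_abs, abs_of_nonneg (sq_nonneg _),
          ← sq_abs]
        nlinarith [hδbd x, abs_nonneg (δ x)]
      · rw [Set.indicator_of_notMem hx, hδ0 x hx]
        norm_num
    have hInt_xδ : Integrable (fun x => δ x • x) K := by
      refine hindR.mono'
        (hδmeas.aestronglyMeasurable.smul aestronglyMeasurable_id)
        (ae_of_all _ fun x => ?_)
      by_cases hx : x ∈ S
      · rw [Set.indicator_of_mem hx, norm_smul, Real.norm_eq_abs]
        calc |δ x| * ‖x‖ ≤ 1 * R :=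
              mul_le_mul (hδbd x) (hSprop x hx).2 (norm_nonneg x) one_pos.le
        _ = R := one_mul R
      · rw [Set.indicator_of_notMem hx, hδ0 x hx, zero_smul, norm_zero]
    have hInt_Y1δ : Integrable (fun x => (Y₂ x - 1) * δ x) K := by
      refine ((hY1sq.add hInt_δsq).div_const 2).mono'
        (((hYmeas.sub measurable_const).mul hδmeas).aestronglyMeasurable)
        (ae_of_all _ fun x => ?_)
      simp only [Pi.add_apply]
      rw [Real.norm_eq_abs, abs_mul]
      nlinarith [sq_nonneg (|Y₂ x - 1| - |δ x|), abs_nonneg (Y₂ x - 1),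
        abs_nonneg (δ x), sq_abs (Y₂ x - 1), sq_abs (δ x)]
    have hInt_ipδ : Integrable (fun x => δ x * ⟪β₂, x⟫) K := by
      refine hindRb.mono' ((hδmeas.mul hinner_meas).aestronglyMeasurable)
        (ae_of_all _ fun x => ?_)
      by_cases hx : x ∈ S
      · rw [Set.indicator_of_mem hx, Real.norm_eq_abs, abs_mul]
        have h1 : |⟪β₂, x⟫| ≤ ‖β₂‖ * ‖x‖ := abs_real_inner_le_norm β₂ x
        have h2 := (hSprop x hx).2
        have h4 : |⟪β₂, x⟫| ≤ R * ‖β₂‖ := by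
          refine h1.trans ?_
          rw [mul_comm]
          exact mul_le_mul_of_nonneg_right h2 (norm_nonneg β₂)
        calc |δ x| * |⟪β₂, x⟫| ≤ 1 * (R * ‖β₂‖) :=
              mul_le_mul (hδbd x) h4 (abs_nonneg _) one_pos.le
        _ = R * ‖β₂‖ := one_mul _
      · rw [Set.indicator_of_notMem hx, hδ0 x hx, zero_mul, norm_zero]
    set v : E d := ∫ x, δ x • x ∂K with hv_def
    set γ : E d := -(mv c⁻¹ v) with hγ_def
    have hcγ : mv c γ = -v := by
      rw [hγ_def, mv_neg, mv_mv, Matrix.mul_nonsing_inv c hdet, mv_one]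
    set Aq : ℝ := ⟪γ, mv c γ⟫ + ∫ x, δ x ^ 2 ∂K with hA_def
    set Bq : ℝ := 2 * ⟪γ, mv c β₂⟫ + 2 * ∫ x, (Y₂ x - 1) * δ x ∂K with hB_def
    have hBq0 : Bq = 0 := by
      refine quad_zero (A := Aq) (B := Bq) (half_pos hε) fun t ht => ?_
      set Yt : E d → ℝ := fun x => Y₂ x + t * δ x with hYt_def
      set βt : E d := β₂ + t • γ with hβt_def
      have hYtmeas : Measurable Yt := hYmeas.add (measurable_const.mul hδmeas)
      have hYtexp : (fun x => (Yt x - 1) ^ 2) =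
          fun x => (Y₂ x - 1) ^ 2 + ((2 * t) * ((Y₂ x - 1) * δ x) + t ^ 2 * δ x ^ 2) := by
        funext x; simp only [hYt_def]; ring
      have hYtsq : Integrable (fun x => (Yt x - 1) ^ 2) K := by
        rw [hYtexp]
        have hg : Integrable (fun x => 2 * t * ((Y₂ x - 1) * δ x) + t ^ 2 * δ x ^ 2) K :=
          (hInt_Y1δ.const_mul (2 * t)).add (hInt_δsq.const_mul (t ^ 2))
        exact hY1sq.add hg
      have hsplit : ∀ x : E d, Yt x • x - trunc x =
          (Y₂ x • x - trunc x) + t • (δ x • x) := by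
        intro x
        simp only [hYt_def, add_smul, smul_smul]
        abel
      have hIg : Integrable (fun x => t • (δ x • x)) K := hInt_xδ.smul t
      have hmemt : memA 2 b c K βt Yt := by
        refine ⟨hYtmeas, ?_, ⟨?_, ?_⟩, ?_⟩
        · filter_upwards [hYpos] with x hx
          by_cases hxS : x ∈ S
          · have h1 := (hSprop x hxS).1
            have h2 : |t * δ x| ≤ ε / 2 := by
              rw [abs_mul]
              calc |t| * |δ x| ≤ ε / 2 * 1 :=
                    mul_le_mul ht (hδbd x) (abs_nonneg _) (half_pos hε).le
              _ = ε / 2 := mul_one _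
            have h3 := (abs_le.1 h2).1
            simp only [hYt_def]
            linarith
          · simp only [hYt_def, hδ0 x hxS, mul_zero, add_zero]
            exact hx
        · simp only [hsplit]
          exact hMint.add hIg
        · simp only [hsplit]
          rw [integral_add hMint hIg, integral_smul]
          have hm : mv c βt = mv c β₂ + t • mv c γ := by rw [hβt_def, mv_add, mv_smul]
          rw [hm, hcγ]
          have hre : b + (mv c β₂ + t • -v) + (∫ x, (Y₂ x • x - trunc x) ∂K + t • v)
              = (b + mv c β₂ + ∫ x, (Y₂ x • x - trunc x) ∂K) + (t • -v + t • v) := by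
            abel
          rw [hre, hMeq, smul_neg, neg_add_cancel, add_zero]
        · simp only [gq_two]
          exact hYtsq.lintegral_lt_top
      have hle := hmin βt Yt hmemt
      rw [hk β₂ Y₂, hk βt Yt] at hle
      have hBt : ⟪βt, mv c βt⟫ =
          ⟪β₂, mv c β₂⟫ + (2 * ⟪γ, mv c β₂⟫) * t + ⟪γ, mv c γ⟫ * t ^ 2 := by
        have hm : mv c βt = mv c β₂ + t • mv c γ := by rw [hβt_def, mv_add, mv_smul]
        rw [hβt_def, hm, inner_add_left, inner_add_right, inner_add_right,
          real_inner_smul_left, real_inner_smul_left, real_inner_smul_right,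
          real_inner_smul_right]
        have h1 : ⟪β₂, mv c γ⟫ = ⟪γ, mv c β₂⟫ := by
          rw [inner_mv_symm hsym, real_inner_comm]
        rw [h1]; ring
      have hIt : ∫ x, (Yt x - 1) ^ 2 ∂K =
          ∫ x, (Y₂ x - 1) ^ 2 ∂K + ((2 * ∫ x, (Y₂ x - 1) * δ x ∂K) * t
            + (∫ x, δ x ^ 2 ∂K) * t ^ 2) := by
        have hg1 : Integrable (fun x => 2 * t * ((Y₂ x - 1) * δ x)) K :=
          hInt_Y1δ.const_mul (2 * t)
        have hg2 : Integrable (fun x => t ^ 2 * δ x ^ 2) K :=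
          hInt_δsq.const_mul (t ^ 2)
        have hg : Integrable (fun x => 2 * t * ((Y₂ x - 1) * δ x) + t ^ 2 * δ x ^ 2) K :=
          hg1.add hg2
        rw [hYtexp, integral_add hY1sq hg, integral_add hg1 hg2,
          integral_const_mul, integral_const_mul]
        ring
      rw [hBt, hIt] at hle
      simp only [hA_def, hB_def]
      nlinarith [hle]
    have hinnerv : ⟪γ, mv c β₂⟫ = -∫ x, δ x * ⟪β₂, x⟫ ∂K := by
      rw [inner_mv_symm hsym, hcγ, inner_neg_left]
      have h1 : ⟪v, β₂⟫ = ∫ x, δ x * ⟪β₂, x⟫ ∂K := by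
        rw [real_inner_comm, hv_def, ← integral_inner hInt_xδ]
        congr 1
        funext x
        rw [real_inner_smul_right]
      rw [h1]
    have hIδZeq : (fun x => δ x * Z x) = fun x => (Y₂ x - 1) * δ x - δ x * ⟪β₂, x⟫ := by
      funext x
      simp only [hZ_def]
      ring
    have hIδZ : Integrable (fun x => δ x * Z x) K := by
      rw [hIδZeq]
      exact hInt_Y1δ.sub hInt_ipδ
    have hIδZ0 : ∫ x, δ x * Z x ∂K = 0 := by
      rw [hIδZeq, integral_sub hInt_Y1δ hInt_ipδ]
      rw [hB_def, hinnerv] at hBq0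
      linarith
    have hnn : 0 ≤ᵐ[K] fun x => δ x * Z x := by
      refine ae_of_all _ fun x => ?_
      show (0 : ℝ) ≤ δ x * Z x
      by_cases hx : x ∈ S
      · rw [hδmem x hx, sg_mul_self]
        exact abs_nonneg _
      · rw [hδ0 x hx, zero_mul]
    have hz := (integral_eq_zero_iff_of_nonneg_ae hnn hIδZ).1 hIδZ0
    filter_upwards [hz] with x hx hxS
    have h5 : sg (Z x) * Z x = 0 := by
      rw [← hδmem x hxS]
      exact hx
    rw [sg_mul_self] at h5
    exact abs_eq_zero.1 h5
  -- sets exhausting {Y₂ > 0} ∩ {x ≠ 0}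
  have hfinann : ∀ n : ℕ, K {x : E d | 1 / ((n : ℝ) + 1) ≤ ‖x‖} < ⊤ := by
    intro n
    set ε0 : ℝ := min 1 ((1 / ((n : ℝ) + 1)) ^ 2) with hε0_def
    have hε0pos : 0 < ε0 := lt_min one_pos (by positivity)
    have hle : ENNReal.ofReal ε0 * K {x : E d | 1 / ((n : ℝ) + 1) ≤ ‖x‖} ≤
        ∫⁻ x, ENNReal.ofReal (min 1 (‖x‖ ^ 2)) ∂K := by
      rw [← setLIntegral_const]
      refine le_trans (setLIntegral_mono ?_ ?_) (setLIntegral_le_lintegral _ _)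
      · exact ENNReal.measurable_ofReal.comp
          (measurable_const.min (measurable_norm.pow_const 2))
      · intro x hx
        apply ENNReal.ofReal_le_ofReal
        have hx' : 1 / ((n : ℝ) + 1) ≤ ‖x‖ := hx
        have h2 : (1 / ((n : ℝ) + 1)) ^ 2 ≤ ‖x‖ ^ 2 :=
          pow_le_pow_left₀ (by positivity) hx' 2
        exact min_le_min le_rfl h2
    by_contra hcon
    rw [not_lt, top_le_iff] at hcon
    rw [hcon, ENNReal.mul_top (ENNReal.ofReal_pos.mpr hε0pos).ne'] at hle
    exact lt_irrefl ⊤ (lt_of_le_of_lt hle hK.2)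
  set S : ℕ → ℕ → Set (E d) := fun m n =>
    {x | 1 / ((m : ℝ) + 1) ≤ Y₂ x ∧ 1 / ((n : ℝ) + 1) ≤ ‖x‖ ∧ ‖x‖ ≤ (n : ℝ) + 1}
    with hS_def
  have hSmeas : ∀ m n, MeasurableSet (S m n) := by
    intro m n
    exact ((measurableSet_le measurable_const hYmeas).inter
      ((measurableSet_le measurable_const measurable_norm).inter
        (measurableSet_le measurable_norm measurable_const)))
  have hSfin : ∀ m n, K (S m n) < ⊤ := by
    intro m n
    refine lt_of_le_of_lt (measure_mono ?_) (hfinann n)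
    intro x hx
    exact hx.2.1
  have hall : ∀ᵐ x ∂K, ∀ m n : ℕ, x ∈ S m n → Z x = 0 := by
    rw [ae_all_iff]
    intro m
    rw [ae_all_iff]
    intro n
    refine key (S m n) (hSmeas m n) (hSfin m n) (1 / ((m : ℝ) + 1)) ((n : ℝ) + 1)
      (by positivity) (by positivity) ?_
    intro x hx
    exact ⟨hx.1, hx.2.2⟩
  have hne0 : ∀ᵐ x ∂K, x ≠ 0 := by
    rw [ae_iff]
    convert hK.1 using 2
    ext x
    simp
  have hZ0 : ∀ᵐ x ∂K, Z x = 0 := by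
    filter_upwards [hall, hYpos, hne0] with x hx hpos hx0
    obtain ⟨m, hm⟩ := exists_nat_one_div_lt hpos
    have hxn : 0 < ‖x‖ := norm_pos_iff.2 hx0
    obtain ⟨n1, hn1⟩ := exists_nat_one_div_lt hxn
    obtain ⟨n2, hn2⟩ := exists_nat_ge ‖x‖
    refine hx m (max n1 n2) ⟨hm.le, ?_, ?_⟩
    · refine le_trans ?_ hn1.le
      have h1 : (n1 : ℝ) + 1 ≤ (max n1 n2 : ℕ) + 1 := by
        have : (n1 : ℝ) ≤ (max n1 n2 : ℕ) := by exact_mod_cast le_max_left n1 n2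
        linarith
      exact one_div_le_one_div_of_le (by positivity) h1
    · refine hn2.trans ?_
      have : (n2 : ℝ) ≤ (max n1 n2 : ℕ) := by exact_mod_cast le_max_right n1 n2
      linarith
  have hae1 : ∀ᵐ x ∂K, Y₂ x = ⟪β₂, x⟫ + 1 := by
    filter_upwards [hZ0] with x hx
    simp only [hZ_def] at hx
    linarith
  refine ⟨hae1, ?_⟩
  filter_upwards [hae1, hYpos] with x hx hpos
  rw [← hx]
  exact hpos
end
end

section
/- Let q = 2, assume ∫ ‖x‖² K(dx) < ∞ and c = 0. Suppose (β₂, Y₂) ∈ A_2 minimizes k_2 over A_2 and that condition (D) holds: the set H¹(Y₂) := { Ψ ∈ L²(K) : ∫ Ψ(x)·x K(dx) = 0 ∈ ℝ^d and |Ψ(x)| ≤ a·Y₂(x) K-a.e. for some a > 0 } is L²(K)-dense in H² := { Ψ ∈ L²(K) : ∫ Ψ(x)·x K(dx) = 0 ∈ ℝ^d }. Then there exists α ∈ ℝ^d such that Y₂(x) = αᵀx + 1 for K-almost every x; in particular condition (C_2) holds with λ̃_2 = α. -/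
open MeasureTheory
open scoped ENNReal RealInnerProductSpace

noncomputable section

lemma mv_zero {d : ℕ} (v : E d) : mv (0 : Matrix (Fin d) (Fin d) ℝ) v = 0 := by
  simp [mv, Matrix.zero_mulVec]
lemma kq_two {d : ℕ} (K : Measure (E d)) (β : E d) (Y : E d → ℝ) :
    kq 2 (0 : Matrix (Fin d) (Fin d) ℝ) K β Y = ∫ x, (Y x - 1) ^ 2 ∂K := by
  rw [kq, mv_zero, inner_zero_right]
  simp only [gq_two, mul_zero, zero_add]
lemma memtwo {d : ℕ} {K : Measure (E d)} {f : E d → ℝ} (hm : AEStronglyMeasurable f K) :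
    MemLp f 2 K ↔ ∫⁻ x, ENNReal.ofReal ((f x) ^ 2) ∂K < ⊤ := by
  rw [memLp_two_iff_integrable_sq hm]
  have hc : ∀ x : E d, ‖f x ^ 2‖ₑ = ENNReal.ofReal ((f x) ^ 2) := fun x =>
    Real.enorm_eq_ofReal (sq_nonneg _)
  constructor
  · intro h
    have := h.2
    rw [HasFiniteIntegral] at this
    simpa only [hc] using this
  · intro h
    refine ⟨(hm.mul hm).congr (Filter.Eventually.of_forall fun x => by simp [sq]), ?_⟩
    rw [HasFiniteIntegral]
    simpa only [hc] using h
lemma memid {d : ℕ} {K : Measure (E d)} (hsq : Integrable (fun x : E d => ‖x‖ ^ 2) K) :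
    MemLp (fun x : E d => x) 2 K :=
  (memLp_two_iff_integrable_sq_norm (aestronglyMeasurable_id (α := E d) (μ := K))).mpr hsq
lemma intmul {d : ℕ} {K : Measure (E d)} {f g : E d → ℝ} (hf : MemLp f 2 K)
    (hg : MemLp g 2 K) : Integrable (fun x => f x * g x) K := by
  have := hg.smul (φ := f) hf (r := 1)
  exact memLp_one_iff_integrable.mp this
lemma intsmul {d : ℕ} {K : Measure (E d)} {f : E d → ℝ} (hf : MemLp f 2 K)
    (hsq : Integrable (fun x : E d => ‖x‖ ^ 2) K) :
    Integrable (fun x => f x • x) K := by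
  have := (memid hsq).smul (φ := f) hf (r := 1)
  exact memLp_one_iff_integrable.mp this
lemma memproj {d : ℕ} {K : Measure (E d)} (hsq : Integrable (fun x : E d => ‖x‖ ^ 2) K)
    (i : Fin d) : MemLp (fun x : E d => x i) 2 K :=
  (EuclideanSpace.proj (𝕜 := ℝ) i).comp_memLp' (memid hsq)

lemma orth1 {d : ℕ} {b : E d} {K : Measure (E d)}
    (hsq : Integrable (fun x => ‖x‖ ^ 2) K)
    {β₂ : E d} {Y₂ : E d → ℝ}
    (hmem : memA 2 b (0 : Matrix (Fin d) (Fin d) ℝ) K β₂ Y₂)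
    (hmin : ∀ β Y, memA 2 b (0 : Matrix (Fin d) (Fin d) ℝ) K β Y →
      kq 2 (0 : Matrix (Fin d) (Fin d) ℝ) K β₂ Y₂ ≤ kq 2 (0 : Matrix (Fin d) (Fin d) ℝ) K β Y)
    {Φ : E d → ℝ} (hΦ : MemLp Φ 2 K) (hΦ0 : ∫ x, Φ x • x ∂K = 0)
    {a : ℝ} (ha : 0 < a) (hb : ∀ᵐ x ∂K, |Φ x| ≤ a * Y₂ x) :
    ∫ x, (Y₂ x - 1) * Φ x ∂K = 0 := by
  -- measurable representative
  obtain ⟨hmY, hpos, hM, hfin⟩ := hmem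
  have hae : AEMeasurable Φ K := hΦ.aestronglyMeasurable.aemeasurable
  set Φ' : E d → ℝ := hae.mk Φ with hΦ'def
  have hΦ'm : Measurable Φ' := hae.measurable_mk
  have heq : Φ =ᵐ[K] Φ' := hae.ae_eq_mk
  have hΦ'2 : MemLp Φ' 2 K := hΦ.ae_eq heq
  have hΦ'0 : ∫ x, Φ' x • x ∂K = 0 := by
    rw [← hΦ0]; exact integral_congr_ae (by filter_upwards [heq] with x hx; rw [hx])
  have hb' : ∀ᵐ x ∂K, |Φ' x| ≤ a * Y₂ x := by
    filter_upwards [hb, heq] with x h1 h2; rw [← h2]; exact h1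
  -- Z and integrability facts
  set Z : E d → ℝ := fun x => Y₂ x - 1 with hZdef
  have hZm : AEStronglyMeasurable Z K := (hmY.sub measurable_const).aestronglyMeasurable
  have hZ2 : MemLp Z 2 K := by
    rw [memtwo hZm]
    simpa only [gq_two] using hfin
  have hIZZ : Integrable (fun x => Z x ^ 2) K := (memLp_two_iff_integrable_sq hZm).mp hZ2
  have hIZΦ : Integrable (fun x => Z x * Φ' x) K := intmul hZ2 hΦ'2
  have hIΦΦ : Integrable (fun x => Φ' x ^ 2) K := by
    have := intmul hΦ'2 hΦ'2
    exact this.congr (Filter.Eventually.of_forall fun x => by ring)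
  set I : ℝ := ∫ x, Z x * Φ' x ∂K with hIdef
  set J : ℝ := ∫ x, Φ' x ^ 2 ∂K with hJdef
  have hJnn : 0 ≤ J := integral_nonneg fun x => sq_nonneg _
  -- key inequality for small t
  have key : ∀ t : ℝ, |t| ≤ 1 / (2 * a) → 0 ≤ 2 * t * I + t ^ 2 * J := by
    intro t ht
    set Yt : E d → ℝ := fun x => Y₂ x + t * Φ' x with hYtdef
    have hsmul : Integrable (fun x => Φ' x • x) K := intsmul hΦ'2 hsq
    have hmemt : memA 2 b (0 : Matrix (Fin d) (Fin d) ℝ) K β₂ Yt := by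
      refine ⟨hmY.add (measurable_const.mul hΦ'm), ?_, ⟨?_, ?_⟩, ?_⟩
      · -- positivity
        filter_upwards [hpos, hb'] with x h1 h2
        have h3 : |t * Φ' x| ≤ (1 / (2 * a)) * (a * Y₂ x) := by
          rw [abs_mul]
          exact mul_le_mul ht h2 (abs_nonneg _) (by positivity)
        have h4 : (1 / (2 * a)) * (a * Y₂ x) = Y₂ x / 2 := by field_simp
        have h5 := neg_abs_le (t * Φ' x)
        simp only [Yt]
        nlinarith
      · -- integrability for MCond
        have hsmul2 : Integrable (fun x => t • (Φ' x • x)) K := hsmul.smul t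
        have hfun : (fun x => Yt x • x - trunc x)
            = fun x => (Y₂ x • x - trunc x) + t • (Φ' x • x) := by
          funext x
          simp only [Yt, add_smul, mul_smul]
          abel
        rw [hfun]
        exact hM.1.add hsmul2
      · -- integral equation
        have hsmul2 : Integrable (fun x => t • (Φ' x • x)) K := hsmul.smul t
        have hfun : (fun x => Yt x • x - trunc x)
            = fun x => (Y₂ x • x - trunc x) + t • (Φ' x • x) := by
          funext x
          simp only [Yt, add_smul, mul_smul]
          abel
        rw [hfun, integral_add hM.1 hsmul2, integral_smul, hΦ'0, smul_zero, add_zero]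
        exact hM.2
      · -- finiteness
        have hm2 : MemLp (fun x => Yt x - 1) 2 K := by
          have h : (fun x => Yt x - 1) = fun x => Z x + t * Φ' x := by
            funext x; simp only [Yt, Z]; ring
          rw [h]
          exact hZ2.add (hΦ'2.const_mul t)
        have := (memtwo ((hmY.add (measurable_const.mul hΦ'm)).sub
          measurable_const).aestronglyMeasurable).mp hm2
        simpa only [gq_two, Pi.add_apply, Pi.sub_apply, Pi.mul_apply] using this
    have hle := hmin β₂ Yt hmemt
    rw [kq_two, kq_two] at hle
    have hexp : ∀ x, (Yt x - 1) ^ 2 = Z x ^ 2 + (2 * t) * (Z x * Φ' x) + t ^ 2 * Φ' x ^ 2 := by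
      intro x; simp only [Yt, Z]; ring
    rw [show (fun x => (Yt x - 1) ^ 2)
        = fun x => Z x ^ 2 + (2 * t) * (Z x * Φ' x) + t ^ 2 * Φ' x ^ 2 from funext hexp] at hle
    have hA : Integrable (fun x => Z x ^ 2 + (2 * t) * (Z x * Φ' x)) K :=
      hIZZ.add (hIZΦ.const_mul _)
    have hB : Integrable (fun x => t ^ 2 * Φ' x ^ 2) K := hIΦΦ.const_mul _
    have hle' : ∫ x, Z x ^ 2 ∂K
        ≤ ∫ x, (Z x ^ 2 + (2 * t) * (Z x * Φ' x) + t ^ 2 * Φ' x ^ 2) ∂K := hle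
    rw [integral_add hA hB, integral_add hIZZ (hIZΦ.const_mul _),
      integral_const_mul, integral_const_mul] at hle'
    have h1 : ∫ x, Z x * Φ' x ∂K = I := rfl
    have h2 : ∫ x, Φ' x ^ 2 ∂K = J := rfl
    rw [h1, h2] at hle'
    linarith
  -- conclude I = 0
  have hI0 : I = 0 := by
    by_contra hI
    have hIsq : 0 < I ^ 2 := by positivity
    set u : ℝ := min (1 / (2 * a * |I|)) (1 / (J + 1)) with hudef
    have hu1 : 0 < u := lt_min (by positivity) (by positivity)
    have hu2 : u * |I| ≤ 1 / (2 * a) := by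
      have : u ≤ 1 / (2 * a * |I|) := min_le_left _ _
      have hIa : 0 < |I| := abs_pos.mpr hI
      calc u * |I| ≤ (1 / (2 * a * |I|)) * |I| := by gcongr
        _ = 1 / (2 * a) := by field_simp
    have hu3 : u * J ≤ 1 := by
      have h1 : u ≤ 1 / (J + 1) := min_le_right _ _
      have h2 : 0 < J + 1 := by linarith
      calc u * J ≤ (1 / (J + 1)) * J := by gcongr
        _ ≤ 1 := by rw [div_mul_eq_mul_div, div_le_one h2]; linarith
    have ht : |(-u * I)| ≤ 1 / (2 * a) := by
      rw [abs_mul, abs_neg, abs_of_pos hu1]; exact hu2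
    have hk := key (-u * I) ht
    have hint2 : (u * J) * (u * I ^ 2) ≤ 1 * (u * I ^ 2) :=
      mul_le_mul_of_nonneg_right hu3 (mul_pos hu1 hIsq).le
    nlinarith [hk, hint2, mul_pos hu1 hIsq]
  rw [← hI0, hIdef]
  exact integral_congr_ae (by filter_upwards [heq] with x hx; rw [hx])

/-- **Theorem 3.1, case 2**: let `∫ ‖x‖² K(dx) < ∞` and `c = 0`. If `(β₂, Y₂)`
minimizes `k₂` over `A₂` and condition `(D)` holds (the set
`H¹(Y₂) = {Ψ ∈ L²(K) : ∫ Ψ(x) x K(dx) = 0, |Ψ| ≤ a Y₂ K-a.e. for some a > 0}` is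
`L²(K)`-dense in `H² = {Ψ ∈ L²(K) : ∫ Ψ(x) x K(dx) = 0}`), then there is `α ∈ ℝ^d`
with `Y₂(x) = αᵀx + 1` `K`-a.e.; in particular `(C₂)` holds with `λ̃₂ = α`. -/
theorem stmt5 (d : ℕ) (hd : 1 ≤ d)
    (b : E d) (K : Measure (E d)) (hK : IsLevyMeasure K)
    (hsq : Integrable (fun x => ‖x‖ ^ 2) K)
    (β₂ : E d) (Y₂ : E d → ℝ)
    (hmem : memA 2 b (0 : Matrix (Fin d) (Fin d) ℝ) K β₂ Y₂)
    (hmin : ∀ β Y, memA 2 b (0 : Matrix (Fin d) (Fin d) ℝ) K β Y →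
      kq 2 (0 : Matrix (Fin d) (Fin d) ℝ) K β₂ Y₂ ≤ kq 2 (0 : Matrix (Fin d) (Fin d) ℝ) K β Y)
    -- condition (D)
    (hD : ∀ Ψ : E d → ℝ, MemLp Ψ 2 K → (∫ x, Ψ x • x ∂K = 0) → ∀ ε : ℝ, 0 < ε →
      ∃ Φ : E d → ℝ, MemLp Φ 2 K ∧ (∫ x, Φ x • x ∂K = 0) ∧
        (∃ a > 0, ∀ᵐ x ∂K, |Φ x| ≤ a * Y₂ x) ∧
        eLpNorm (fun x => Ψ x - Φ x) 2 K < ENNReal.ofReal ε) :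
    ∃ α : E d, (∀ᵐ x ∂K, Y₂ x = ⟪α, x⟫ + 1) ∧ (∀ᵐ x ∂K, 0 < ⟪α, x⟫ + 1) ∧
      MCond b (0 : Matrix (Fin d) (Fin d) ℝ) K α (fun x => ⟪α, x⟫ + 1) := by
  have hmY : Measurable Y₂ := hmem.1
  have hpos : ∀ᵐ x ∂K, 0 < Y₂ x := hmem.2.1
  have hM : MCond b 0 K β₂ Y₂ := hmem.2.2.1
  have hZm : AEStronglyMeasurable (fun x => Y₂ x - 1) K :=
    (hmY.sub measurable_const).aestronglyMeasurable
  have hZ2 : MemLp (fun x => Y₂ x - 1) 2 K :=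
    (memtwo hZm).mpr (by simpa only [gq_two] using hmem.2.2.2)
  -- Step 2 : orthogonality to all of H²
  have orth2 : ∀ Ψ : E d → ℝ, MemLp Ψ 2 K → (∫ x, Ψ x • x ∂K = 0) →
      ∫ x, (Y₂ x - 1) * Ψ x ∂K = 0 := by
    intro Ψ hΨ hΨ0
    set v : ℝ := ∫ x, (Y₂ x - 1) * Ψ x ∂K with hvdef
    set C : ℝ := ‖hZ2.toLp _‖ with hCdef
    have hC : 0 ≤ C := norm_nonneg _
    have hbound : ∀ ε : ℝ, 0 < ε → |v| ≤ C * ε := by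
      intro ε hε
      obtain ⟨Φ, hΦ, hΦ0, ⟨a, ha, hab⟩, hnear⟩ := hD Ψ hΨ hΨ0 ε hε
      have hZΦ : ∫ x, (Y₂ x - 1) * Φ x ∂K = 0 := orth1 hsq hmem hmin hΦ hΦ0 ha hab
      have hWm : MemLp (fun x => Ψ x - Φ x) 2 K := hΨ.sub hΦ
      have hinner : ⟪hZ2.toLp _, hWm.toLp _⟫ = ∫ x, (Y₂ x - 1) * (Ψ x - Φ x) ∂K := by
        rw [L2.inner_def]
        apply integral_congr_ae
        filter_upwards [hZ2.coeFn_toLp, hWm.coeFn_toLp] with x h1 h2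
        rw [h1, h2]
        simp [RCLike.inner_apply]
        ring
      have hsplit : ∫ x, (Y₂ x - 1) * (Ψ x - Φ x) ∂K = v := by
        have h1 : Integrable (fun x => (Y₂ x - 1) * Ψ x) K := intmul hZ2 hΨ
        have h2 : Integrable (fun x => (Y₂ x - 1) * Φ x) K := intmul hZ2 hΦ
        rw [show (fun x => (Y₂ x - 1) * (Ψ x - Φ x))
            = fun x => (Y₂ x - 1) * Ψ x - (Y₂ x - 1) * Φ x from funext fun x => by ring,
          integral_sub h1 h2, hZΦ, sub_zero]
      have hnorm : ‖hWm.toLp _‖ ≤ ε := by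
        rw [Lp.norm_toLp]
        exact ENNReal.toReal_le_of_le_ofReal hε.le hnear.le
      calc |v| = |⟪hZ2.toLp _, hWm.toLp _⟫| := by rw [hinner, hsplit]
        _ ≤ C * ‖hWm.toLp _‖ := abs_real_inner_le_norm _ _
        _ ≤ C * ε := by gcongr
    by_contra hne
    have h0 : 0 < |v| := abs_pos.mpr hne
    have hb2 := hbound (|v| / (2 * (C + 1))) (by positivity)
    have hlt : C * (|v| / (2 * (C + 1))) < |v| := by
      rw [mul_div_assoc', div_lt_iff₀ (by positivity)]
      nlinarith
    linarith
  -- Step 3 : Z belongs to the span of the coordinate functions in L²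
  have heL : ∀ i : Fin d, MemLp (fun x : E d => x i) 2 K := memproj hsq
  set eL : Fin d → Lp ℝ 2 K := fun i => (heL i).toLp _ with heLdef
  haveI : FiniteDimensional ℝ (Submodule.span ℝ (Set.range eL)) :=
    FiniteDimensional.span_of_finite ℝ (Set.finite_range eL)
  haveI : CompleteSpace (Submodule.span ℝ (Set.range eL)) := by
    have := Submodule.complete_of_finiteDimensional (Submodule.span ℝ (Set.range eL))
    exact completeSpace_coe_iff_isComplete.mpr this
  set ZL : Lp ℝ 2 K := hZ2.toLp _ with hZLdef
  have hZV : ZL ∈ (Submodule.span ℝ (Set.range eL))ᗮᗮ := by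
    rw [Submodule.mem_orthogonal]
    intro w hw
    have hwm : MemLp (⇑w) 2 K := Lp.memLp w
    have hwi : ∀ i : Fin d, ∫ x, w x * x i ∂K = 0 := by
      intro i
      have h1 : ⟪eL i, w⟫ = 0 :=
        (Submodule.mem_orthogonal _ _).mp hw _ (Submodule.subset_span ⟨i, rfl⟩)
      have h2 : ⟪eL i, w⟫ = ∫ x, w x * x i ∂K := by
        rw [L2.inner_def]
        apply integral_congr_ae
        filter_upwards [(heL i).coeFn_toLp] with x h
        rw [show (eL i : E d → ℝ) = ⇑((heL i).toLp _) from rfl] at h ⊢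
        rw [h]
        simp [RCLike.inner_apply]
      rw [← h2, h1]
    have hwint : Integrable (fun x => w x • x) K := intsmul hwm hsq
    have hw0 : ∫ x, w x • x ∂K = 0 := by
      apply PiLp.ext
      intro i
      have h3 : (∫ x, w x • x ∂K) i = ∫ x, w x * x i ∂K := by
        rw [show (∫ x, w x • x ∂K) i
            = EuclideanSpace.proj (𝕜 := ℝ) i (∫ x, w x • x ∂K) from rfl,
          ← ContinuousLinearMap.integral_comp_comm _ hwint]
        rfl
      rw [h3, hwi i]
      rfl
    have h4 : ∫ x, (Y₂ x - 1) * w x ∂K = 0 := orth2 (⇑w) hwm hw0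
    rw [L2.inner_def, ← h4]
    apply integral_congr_ae
    filter_upwards [hZ2.coeFn_toLp] with x h
    rw [show (ZL : E d → ℝ) = ⇑(hZ2.toLp _) from rfl, h]
    simp [RCLike.inner_apply]
  have hZVmem : ZL ∈ Submodule.span ℝ (Set.range eL) := by
    rwa [Submodule.orthogonal_orthogonal] at hZV
  obtain ⟨c, hc⟩ := (Submodule.mem_span_range_iff_exists_fun ℝ).mp hZVmem
  -- a.e. representation
  have hsum : ∀ s : Finset (Fin d),
      ⇑(∑ i ∈ s, c i • eL i) =ᵐ[K] fun x => ∑ i ∈ s, c i * x i := by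
    intro s
    induction s using Finset.induction_on with
    | empty =>
      simp only [Finset.sum_empty]
      filter_upwards [Lp.coeFn_zero ℝ 2 K] with x h
      simpa using h
    | insert j s' hni ih =>
      rw [Finset.sum_insert hni]
      filter_upwards [Lp.coeFn_add (c j • eL j) (∑ i ∈ s', c i • eL i),
        Lp.coeFn_smul (c j) (eL j), (heL j).coeFn_toLp, ih] with x ha hb hc' hd'
      rw [Finset.sum_insert hni, ha]
      simp only [Pi.add_apply]
      rw [hd', hb]
      simp only [Pi.smul_apply, smul_eq_mul]
      rw [show (eL j : E d → ℝ) x = ((heL j).toLp _ : E d → ℝ) x from rfl, hc']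
    
  have hae2 : (fun x => Y₂ x - 1) =ᵐ[K] fun x => ∑ i, c i * x i := by
    have h1 := hZ2.coeFn_toLp
    have h2 := hsum Finset.univ
    rw [hc] at h2
    exact h1.symm.trans h2
  set α : E d := (WithLp.equiv 2 (Fin d → ℝ)).symm (fun i => c i) with hαdef
  have hinner : ∀ x : E d, ⟪α, x⟫ = ∑ i, c i * x i := by
    intro x
    rw [PiLp.inner_apply]
    apply Finset.sum_congr rfl
    intro i _
    simp [RCLike.inner_apply, hαdef]
    ring
  have key1 : ∀ᵐ x ∂K, Y₂ x = ⟪α, x⟫ + 1 := by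
    filter_upwards [hae2] with x hx
    rw [hinner]
    have hx' : Y₂ x - 1 = ∑ i, c i * x i := hx
    linarith
  refine ⟨α, key1, ?_, ?_, ?_⟩
  · filter_upwards [hpos, key1] with x h1 h2
    rw [← h2]; exact h1
  · refine hM.1.congr ?_
    filter_upwards [key1] with x hx
    rw [hx]
  · have haefun : (fun x => Y₂ x • x - trunc x) =ᵐ[K]
        fun x => (⟪α, x⟫ + 1) • x - trunc x := by
      filter_upwards [key1] with x hx
      rw [hx]
    have h5 := hM.2
    rw [mv_zero] at h5
    rw [mv_zero, ← integral_congr_ae haefun]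
    exact h5
end
end

section
/- For every q ∈ I := (−∞,0) ∪ (1,∞) there exists a constant c = c(q) > 0 such that (1 − √y)² ≤ c·g_q(y) for all y > 0. -/
noncomputable section

lemma gq_one (q : ℝ) : gq q 1 = 0 := by simp [gq]

lemma hasDerivAt_gq (q : ℝ) {t : ℝ} (ht : t ≠ 0) :
    HasDerivAt (gq q) (q * t ^ (q - 1) - q) t := by
  have h1 : HasDerivAt (fun x : ℝ => x ^ q) (q * t ^ (q - 1)) t :=
    Real.hasDerivAt_rpow_const (Or.inl ht)
  have h2 := (h1.sub_const 1).sub (((hasDerivAt_id t).sub_const 1).const_mul q)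
  exact h2.congr_deriv (by ring)

/-- Upper region: if the derivative condition holds for `t ≥ 1`, then the bound holds
for `y ≥ 1`. -/
lemma upper_bound (q c : ℝ)
    (hU : ∀ t : ℝ, 1 ≤ t → 1 - 1 / t ≤ c * q * (t ^ (q - 1) - 1)) :
    ∀ y : ℝ, 1 ≤ y → (1 - Real.sqrt y) ^ 2 ≤ c * gq q y := by
  intro y hy
  set G : ℝ → ℝ := fun t => c * gq q t - (1 - Real.sqrt t) ^ 2 with hGdef
  have hG : ∀ t : ℝ, 0 < t →
      HasDerivAt G (c * q * (t ^ (q - 1) - 1) + (1 / Real.sqrt t - 1)) t := by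
    intro t ht
    have hs : HasDerivAt (fun x : ℝ => (1 - Real.sqrt x) ^ 2)
        ((2 : ℕ) * (1 - Real.sqrt t) ^ 1 * (0 - 1 / (2 * Real.sqrt t))) t :=
      ((hasDerivAt_const t (1 : ℝ)).sub (Real.hasDerivAt_sqrt ht.ne')).pow 2
    have h := ((hasDerivAt_gq q ht.ne').const_mul c).sub hs
    have hst : Real.sqrt t ≠ 0 := (Real.sqrt_pos.2 ht).ne'
    exact h.congr_deriv (by field_simp; ring)
  have key : MonotoneOn G (Set.Icc 1 y) := by
    apply monotoneOn_of_hasDerivWithinAt_nonneg (convex_Icc 1 y)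
      (f' := fun t => c * q * (t ^ (q - 1) - 1) + (1 / Real.sqrt t - 1))
    · intro t ht
      exact (hG t (lt_of_lt_of_le one_pos ht.1)).continuousAt.continuousWithinAt
    · intro t ht
      rw [interior_Icc] at ht
      exact (hG t (lt_trans one_pos ht.1)).hasDerivWithinAt
    · intro t ht
      rw [interior_Icc] at ht
      have ht1 : (1 : ℝ) < t := ht.1
      have ht0 : (0 : ℝ) < t := lt_trans one_pos ht1
      have h1 := hU t ht1.le
      have hsq : Real.sqrt t ≤ t := by
        calc Real.sqrt t ≤ Real.sqrt (t * t) :=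
              Real.sqrt_le_sqrt (le_mul_of_one_le_left ht0.le ht1.le)
          _ = t := Real.sqrt_mul_self ht0.le
      have hsqp : 0 < Real.sqrt t := Real.sqrt_pos.2 ht0
      have h2 : 1 / t ≤ 1 / Real.sqrt t := one_div_le_one_div_of_le hsqp hsq
      linarith
  have h0 : G 1 = 0 := by simp [hGdef, gq_one]
  have h1 : G 1 ≤ G y := key ⟨le_refl 1, hy⟩ ⟨hy, le_refl y⟩ hy
  rw [h0] at h1
  simpa [hGdef] using h1

/-- Lower region: if the derivative condition holds for `0 < t ≤ 1`, then the bound holds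
for `0 < y ≤ 1`. -/
lemma lower_bound (q c : ℝ)
    (hL : ∀ t : ℝ, 0 < t → t ≤ 1 → c * q * (t ^ (q - 1) - 1) + 2 * (1 - t) ≤ 0) :
    ∀ y : ℝ, 0 < y → y ≤ 1 → (1 - Real.sqrt y) ^ 2 ≤ c * gq q y := by
  intro y hy0 hy1
  set F : ℝ → ℝ := fun t => c * gq q t - (1 - t) ^ 2 with hFdef
  have hF : ∀ t : ℝ, 0 < t →
      HasDerivAt F (c * q * (t ^ (q - 1) - 1) + 2 * (1 - t)) t := by
    intro t ht
    have hs : HasDerivAt (fun x : ℝ => (1 - x) ^ 2)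
        ((2 : ℕ) * (1 - t) ^ 1 * (0 - 1)) t :=
      ((hasDerivAt_const t (1 : ℝ)).sub (hasDerivAt_id t)).pow 2
    have h := ((hasDerivAt_gq q ht.ne').const_mul c).sub hs
    exact h.congr_deriv (by ring)
  have key : AntitoneOn F (Set.Icc y 1) := by
    apply antitoneOn_of_hasDerivWithinAt_nonpos (convex_Icc y 1)
      (f' := fun t => c * q * (t ^ (q - 1) - 1) + 2 * (1 - t))
    · intro t ht
      exact (hF t (lt_of_lt_of_le hy0 ht.1)).continuousAt.continuousWithinAt
    · intro t ht
      rw [interior_Icc] at ht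
      exact (hF t (lt_trans hy0 ht.1)).hasDerivWithinAt
    · intro t ht
      rw [interior_Icc] at ht
      exact hL t (lt_trans hy0 ht.1) ht.2.le
  have h0 : F 1 = 0 := by simp [hFdef, gq_one]
  have h1 : F 1 ≤ F y := key ⟨le_refl y, hy1⟩ ⟨hy1, le_refl 1⟩ hy1
  rw [h0] at h1
  have h2 : (1 - y) ^ 2 ≤ c * gq q y := by simpa [hFdef] using h1
  -- (1 - √y)² ≤ (1 - y)²
  have hsy : y ≤ Real.sqrt y := by
    calc y = Real.sqrt (y * y) := (Real.sqrt_mul_self hy0.le).symm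
      _ ≤ Real.sqrt y := Real.sqrt_le_sqrt (mul_le_of_le_one_left hy0.le hy1)
  have hsy1 : Real.sqrt y ≤ 1 := Real.sqrt_le_one.2 hy1
  have h3 : (1 - Real.sqrt y) ^ 2 ≤ (1 - y) ^ 2 := by
    apply pow_le_pow_left₀ (by linarith) (by linarith)
  linarith

/-- `log t ≥ 1 - 1/t` for `t > 0`. -/
lemma one_sub_inv_le_log {t : ℝ} (ht : 0 < t) : 1 - 1 / t ≤ Real.log t := by
  have h := Real.log_le_sub_one_of_pos (show (0 : ℝ) < t⁻¹ by positivity)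
  rw [Real.log_inv] at h
  have : 1 / t = t⁻¹ := one_div t
  linarith

/-- Quantitative Bernoulli, upper region: `t^r ≥ 1 + r (1 - 1/t)` for `t > 0`, `r ≥ 0`. -/
lemma rpow_ge_one_add {t r : ℝ} (ht : 0 < t) (hr : 0 ≤ r) :
    1 + r * (1 - 1 / t) ≤ t ^ r := by
  have h1 : 1 - 1 / t ≤ Real.log t := one_sub_inv_le_log ht
  have h2 : r * (1 - 1 / t) ≤ r * Real.log t := mul_le_mul_of_nonneg_left h1 hr
  rw [Real.rpow_def_of_pos ht]
  have h3 : Real.log t * r + 1 ≤ Real.exp (Real.log t * r) := Real.add_one_le_exp _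
  have h4 : Real.log t * r = r * Real.log t := mul_comm _ _
  linarith

/-- **Lemma B.1**: for `q ∈ (-∞,0) ∪ (1,∞)` there is `c = c(q) > 0` with
`(1 - √y)² ≤ c g_q(y)` for all `y > 0`. -/
theorem stmt8 (q : ℝ) (hq : q < 0 ∨ 1 < q) :
    ∃ c > 0, ∀ y : ℝ, 0 < y → (1 - Real.sqrt y) ^ 2 ≤ c * gq q y := by
  rcases hq with hq | hq
  · -- case q < 0, c = 2 / (-q)
    have hqne : q ≠ 0 := ne_of_lt hq
    have hnq : (0:ℝ) < -q := by linarith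
    refine ⟨2 / (-q), by positivity, ?_⟩
    have hcq : 2 / (-q) * q = -2 := by
      rw [div_mul_eq_mul_div, div_neg, mul_div_assoc, div_self hqne]
      norm_num
    have hU : ∀ t : ℝ, 1 ≤ t → 1 - 1 / t ≤ 2 / (-q) * q * (t ^ (q - 1) - 1) := by
      intro t ht
      rw [hcq]
      have ht0 : (0 : ℝ) < t := lt_of_lt_of_le one_pos ht
      have h1 : t ^ (q - 1) ≤ t ^ (-1 : ℝ) :=
        Real.rpow_le_rpow_of_exponent_le ht (by linarith)
      rw [Real.rpow_neg_one] at h1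
      have h2 : (0:ℝ) ≤ 1 - 1 / t := by
        rw [sub_nonneg]
        exact div_le_one_of_le₀ ht ht0.le
      have h3 : 1 / t = t⁻¹ := one_div t
      nlinarith
    have hL : ∀ t : ℝ, 0 < t → t ≤ 1 →
        2 / (-q) * q * (t ^ (q - 1) - 1) + 2 * (1 - t) ≤ 0 := by
      intro t ht0 ht1
      rw [hcq]
      have h1 : t ^ (-1 : ℝ) ≤ t ^ (q - 1) :=
        Real.rpow_le_rpow_of_exponent_ge ht0 ht1 (by linarith)
      rw [Real.rpow_neg_one] at h1
      have h2 : 1 - t ≤ t⁻¹ - 1 := by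
        have e : t⁻¹ - 1 - (1 - t) = (1 - t) ^ 2 / t := by
          field_simp
        have epos : 0 ≤ (1 - t) ^ 2 / t := by positivity
        linarith
      nlinarith
    intro y hy
    rcases le_or_gt 1 y with h | h
    · exact upper_bound q _ hU y h
    · exact lower_bound q _ hL y hy h.le
  · -- case 1 < q, c = 3/(q(q-1)) + 2/q
    have hq0 : 0 < q := lt_trans one_pos hq
    have hq1 : 0 < q - 1 := by linarith
    set c : ℝ := 3 / (q * (q - 1)) + 2 / q with hc
    have hcpos : 0 < c := by positivity
    have hcq : c * q = 3 / (q - 1) + 2 := by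
      rw [hc]; field_simp
    have hcq1 : c * q * (q - 1) = 3 + 2 * (q - 1) := by
      rw [hcq]; field_simp
    have hU : ∀ t : ℝ, 1 ≤ t → 1 - 1 / t ≤ c * q * (t ^ (q - 1) - 1) := by
      intro t ht
      have ht0 : (0 : ℝ) < t := lt_of_lt_of_le one_pos ht
      have h1 : 1 + (q - 1) * (1 - 1 / t) ≤ t ^ (q - 1) :=
        rpow_ge_one_add ht0 hq1.le
      have h2 : (0:ℝ) ≤ 1 - 1 / t := by
        rw [sub_nonneg]; exact div_le_one_of_le₀ ht ht0.le
      have h3 : (q - 1) * (1 - 1 / t) ≤ t ^ (q - 1) - 1 := by linarith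
      have h4 : c * q * ((q - 1) * (1 - 1 / t)) ≤ c * q * (t ^ (q - 1) - 1) :=
        mul_le_mul_of_nonneg_left h3 (by positivity)
      have h5 : c * q * ((q - 1) * (1 - 1 / t)) = (3 + 2 * (q - 1)) * (1 - 1 / t) := by
        rw [← mul_assoc, hcq1]
      nlinarith
    have hL : ∀ t : ℝ, 0 < t → t ≤ 1 →
        c * q * (t ^ (q - 1) - 1) + 2 * (1 - t) ≤ 0 := by
      intro t ht0 ht1
      rcases le_or_gt q 2 with h2 | h2
      · -- 1 < q ≤ 2 : Bernoulli upper bound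
        have hb : (1 + (t - 1)) ^ (q - 1) ≤ 1 + (q - 1) * (t - 1) :=
          rpow_one_add_le_one_add_mul_self (by linarith) hq1.le (by linarith)
        rw [show 1 + (t - 1) = t by ring] at hb
        have h3 : t ^ (q - 1) - 1 ≤ (q - 1) * (t - 1) := by linarith
        have h4 : c * q * (t ^ (q - 1) - 1) ≤ c * q * ((q - 1) * (t - 1)) :=
          mul_le_mul_of_nonneg_left h3 (by positivity)
        have h5 : c * q * ((q - 1) * (t - 1)) = (3 + 2 * (q - 1)) * (t - 1) := by
          rw [← mul_assoc, hcq1]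
        nlinarith
      · -- q > 2 : t^(q-1) ≤ t
        have hb : t ^ (q - 1) ≤ t ^ (1 : ℝ) :=
          Real.rpow_le_rpow_of_exponent_ge ht0 ht1 (by linarith)
        rw [Real.rpow_one] at hb
        have h3 : t ^ (q - 1) - 1 ≤ t - 1 := by linarith
        have h4 : c * q * (t ^ (q - 1) - 1) ≤ c * q * (t - 1) :=
          mul_le_mul_of_nonneg_left h3 (by positivity)
        have h6 : 2 ≤ c * q := by
          rw [hcq]
          have : 0 < 3 / (q - 1) := by positivity
          linarith
        nlinarith
    refine ⟨c, hcpos, ?_⟩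
    intro y hy
    rcases le_or_gt 1 y with h | h
    · exact upper_bound q _ hU y h
    · exact lower_bound q _ hL y hy h.le
end
end
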